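/- arXiv:2107.00435 — 11 statements merged into one kernel-verified Lean document; each statement's English description precedes it below -/
import Mathlib

section
/- Let A be an n×n complex matrix with det A ≠ 0, let f be a polynomial with complex coefficients such that the matrix f(A) is invertible, and let ℓ be a natural number with ℓ ≥ 1. Then there exists a matrix Q ∈ ℂ^{n×n} such that Q^ℓ = f(A) and AQ = QA. -/
open Polynomial

/-- In a field that is a finite-dimensional `ℂ`-algebra, every element has an `ℓ`-th root. -/
lemma aux_field_root {F : Type*} [Field F] [Algebra ℂ F] [FiniteDimensional ℂ F]
    (a : F) {ℓ : ℕ} (hℓ : 1 ≤ ℓ) : ∃ b : F, b ^ ℓ = a := by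
  have : Algebra.IsIntegral ℂ F := Algebra.IsIntegral.of_finite ℂ F
  have hsurj : Function.Surjective (algebraMap ℂ F) :=
    IsAlgClosed.algebraMap_bijective_of_isIntegral.2
  obtain ⟨c, rfl⟩ := hsurj a
  obtain ⟨z, hz⟩ := IsAlgClosed.exists_pow_nat_eq c hℓ
  exact ⟨algebraMap ℂ F z, by rw [← map_pow, hz]⟩

/-- In a finite-dimensional commutative `ℂ`-algebra, units have `ℓ`-th roots. -/
lemma aux_unit_root {R : Type*} [CommRing R] [Algebra ℂ R] [FiniteDimensional ℂ R]
    {u : R} (hu : IsUnit u) {ℓ : ℕ} (hℓ : 1 ≤ ℓ) : ∃ v : R, v ^ ℓ = u := by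
  have hart : IsArtinianRing R := isArtinian_of_tower ℂ inferInstance
  let e := IsArtinianRing.quotNilradicalEquivPi R
  have hFD : ∀ I : MaximalSpectrum R, FiniteDimensional ℂ (R ⧸ I.1) := fun I =>
    Module.Finite.of_surjective (Ideal.Quotient.mkₐ ℂ I.1).toLinearMap
      Ideal.Quotient.mk_surjective
  have hroots : ∀ I : MaximalSpectrum R,
      ∃ b : R ⧸ I.1, b ^ ℓ = e (Ideal.Quotient.mk (nilradical R) u) I := fun I => by
    have := hFD I
    haveI : I.1.IsMaximal := I.2
    letI : Field (R ⧸ I.1) := Ideal.Quotient.field I.1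
    exact aux_field_root (e (Ideal.Quotient.mk (nilradical R) u) I) hℓ
  choose b hb using hroots
  obtain ⟨x, hx⟩ := Ideal.Quotient.mk_surjective (e.symm b)
  have key : Ideal.Quotient.mk (nilradical R) (x ^ ℓ - u) = 0 := by
    rw [map_sub, map_pow, hx, ← map_pow e.symm]
    have hbl : b ^ ℓ = e (Ideal.Quotient.mk (nilradical R) u) := funext fun I => hb I
    rw [hbl, AlgEquiv.symm_apply_apply, sub_self]
  have hnil : IsNilpotent (x ^ ℓ - u) :=
    mem_nilradical.mp (Ideal.Quotient.eq_zero_iff_mem.mp key)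
  have hxu : IsUnit x := by
    have hpow : IsUnit (x ^ ℓ) := by
      have := hnil.isUnit_add_right_of_commute hu (Commute.all _ _)
      simpa using this
    exact (isUnit_pow_iff (by omega : ℓ ≠ 0)).mp hpow
  have hP : IsNilpotent (aeval x ((X : R[X]) ^ ℓ - C u)) := by simpa using hnil
  have hP' : IsUnit (aeval x (derivative ((X : R[X]) ^ ℓ - C u))) := by
    rw [derivative_sub, derivative_C, sub_zero, derivative_X_pow, map_mul, aeval_C, map_pow,
      aeval_X]
    have h1 : IsUnit ((ℓ : R)) := by
      have : ((ℓ : R)) = algebraMap ℂ R (ℓ : ℂ) := by simp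
      rw [this]
      exact (algebraMap ℂ R).isUnit_map (isUnit_iff_ne_zero.mpr (by exact_mod_cast by omega))
    exact h1.mul (hxu.pow _)
  obtain ⟨r, ⟨-, hr⟩, -⟩ := Polynomial.existsUnique_nilpotent_sub_and_aeval_eq_zero hP hP'
  refine ⟨r, ?_⟩
  have : r ^ ℓ - u = 0 := by simpa using hr
  exact sub_eq_zero.mp this



set_option maxHeartbeats 1600000 in
/-- Proposition 2.1, existence part. Let `A` be an `n × n` complex matrix
with `det A ≠ 0`, let `f` be a polynomial with complex coefficients such that `f(A)` is
invertible, and let `ℓ ≥ 1`. Then there exists a matrix `Q` with `Q ^ ℓ = f(A)` and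
`A * Q = Q * A`. -/
theorem matrix_root_of_polynomial_commuting {n : ℕ}
    (A : Matrix (Fin n) (Fin n) ℂ) (hA : A.det ≠ 0)
    (f : Polynomial ℂ) (hf : IsUnit ((Polynomial.aeval A) f))
    (ℓ : ℕ) (hℓ : 1 ≤ ℓ) :
    ∃ Q : Matrix (Fin n) (Fin n) ℂ,
      Q ^ ℓ = (Polynomial.aeval A) f ∧ A * Q = Q * A := by
  set B := (Polynomial.aeval A) f with hB
  have hint : IsIntegral ℂ B := IsIntegral.of_finite ℂ B
  set m := minpoly ℂ B with hm
  have hm0 : m ≠ 0 := minpoly.ne_zero hint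
  haveI : FiniteDimensional ℂ (AdjoinRoot m) := (AdjoinRoot.powerBasis hm0).finite
  -- the constant coefficient of the minimal polynomial is nonzero
  have hc : m.coeff 0 ≠ 0 := by
    intro h
    obtain ⟨q, hq⟩ := Polynomial.X_dvd_iff.mpr h
    have h0 : Polynomial.aeval B m = 0 := minpoly.aeval ℂ B
    rw [hq, map_mul, Polynomial.aeval_X] at h0
    have hq0 : Polynomial.aeval B q = 0 := by
      calc Polynomial.aeval B q
          = ↑hf.unit⁻¹ * (↑hf.unit * Polynomial.aeval B q) :=
            (Units.inv_mul_cancel_left _ _).symm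
        _ = ↑hf.unit⁻¹ * (B * Polynomial.aeval B q) := by rw [hf.unit_spec]
        _ = 0 := by rw [h0, mul_zero]
    have hdvd : m ∣ q := minpoly.dvd ℂ B hq0
    have hqne : q ≠ 0 := fun h' => hm0 (by rw [hq, h', mul_zero])
    have hd := Polynomial.natDegree_le_of_dvd hdvd hqne
    have : m.natDegree = 1 + q.natDegree := by
      rw [hq, Polynomial.natDegree_mul Polynomial.X_ne_zero hqne, Polynomial.natDegree_X]
    omega
  -- the root is a unit in `AdjoinRoot m`
  have hu : IsUnit (AdjoinRoot.root m) := by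
    refine IsUnit.of_mul_eq_one
      (AdjoinRoot.mk m (m.divX * Polynomial.C (-(m.coeff 0)⁻¹))) ?_
    have key : (Polynomial.X * (m.divX * Polynomial.C (-(m.coeff 0)⁻¹)) : Polynomial ℂ)
        = m * Polynomial.C (-(m.coeff 0)⁻¹) + 1 := by
      have h1 : (Polynomial.X * m.divX : Polynomial ℂ) = m - Polynomial.C (m.coeff 0) :=
        eq_sub_of_add_eq (Polynomial.X_mul_divX_add m)
      rw [← mul_assoc, h1, sub_mul, ← Polynomial.C_mul]
      have hcc : m.coeff 0 * -(m.coeff 0)⁻¹ = -1 := by field_simp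
      rw [hcc]
      simp [sub_neg_eq_add]
    rw [← AdjoinRoot.mk_X, ← map_mul, key, map_add, map_mul, AdjoinRoot.mk_self, zero_mul,
      map_one, zero_add]
  -- take the root upstairs and push it down
  obtain ⟨v, hv⟩ := aux_unit_root hu hℓ
  obtain ⟨g, rfl⟩ := AdjoinRoot.mk_surjective v
  have hdvd : m ∣ g ^ ℓ - Polynomial.X := by
    rw [← AdjoinRoot.mk_eq_zero, map_sub, map_pow, AdjoinRoot.mk_X, hv, sub_self]
  obtain ⟨c, hc2⟩ := hdvd
  have hφ : (Polynomial.aeval B g) ^ ℓ = B := by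
    have h3 : Polynomial.aeval B (g ^ ℓ - Polynomial.X) = 0 := by
      rw [hc2, map_mul]
      rw [hm] at *
      rw [minpoly.aeval, zero_mul]
    rw [map_sub, map_pow, Polynomial.aeval_X] at h3
    exact sub_eq_zero.mp h3
  refine ⟨Polynomial.aeval B g, hφ, ?_⟩
  have hBg : Polynomial.aeval B g = Polynomial.aeval A (g.comp f) :=
    (Polynomial.aeval_comp A).symm
  have hcomm : Commute A (Polynomial.aeval A (g.comp f)) := by
    simpa using (Commute.all (Polynomial.X : Polynomial ℂ) (g.comp f)).map
      (Polynomial.aeval A)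
  rw [hBg]
  exact hcomm.eq
end

section
/- Let ℓ, p be natural numbers with ℓ ≥ 1 and p ≥ 1, let μ ∈ ℂ with μ ≠ 0, let ξ ∈ ℂ with ξ^ℓ = μ, and let T be a p×p complex matrix with T^p = 0. Define g(T) := Σ_{i=0}^{p−1} C(1/ℓ, i) · ξ · μ^{−i} · T^i, where C(a, i) := a(a−1)⋯(a−i+1)/i! is the generalized binomial coefficient. Then g(T)^ℓ = μ·I_p + T. -/
/-- The generalized binomial coefficient `C(a, i) = a (a-1) ⋯ (a-i+1) / i!`
(with `C(a, 0) = 1`). -/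
noncomputable def genBinom (a : ℂ) (i : ℕ) : ℂ :=
  (∏ k ∈ Finset.range i, (a - (k : ℂ))) / (Nat.factorial i : ℂ)

open Polynomial Finset

noncomputable def genBinomPoly (n : ℕ) : ℂ[X] :=
  Polynomial.C ((Nat.factorial n : ℂ)⁻¹) * ∏ k ∈ Finset.range n, (X - Polynomial.C (k : ℂ))

lemma genBinomPoly_eval (a : ℂ) (n : ℕ) : (genBinomPoly n).eval a = genBinom a n := by
  simp [genBinomPoly, genBinom, div_eq_inv_mul, eval_prod]

lemma genBinom_natCast (N n : ℕ) : genBinom (N : ℂ) n = N.choose n := by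
  rcases le_or_gt n N with h | h
  · have hprod : (∏ k ∈ Finset.range n, ((N : ℂ) - (k : ℂ))) = (N.descFactorial n : ℂ) := by
      rw [Nat.descFactorial_eq_prod_range, Nat.cast_prod]
      refine Finset.prod_congr rfl fun k hk => ?_
      rw [Nat.cast_sub (Nat.lt_of_lt_of_le (Finset.mem_range.mp hk) h).le]
    have hfac : (Nat.factorial n : ℂ) ≠ 0 := Nat.cast_ne_zero.mpr n.factorial_ne_zero
    rw [genBinom, hprod, Nat.descFactorial_eq_factorial_mul_choose, Nat.cast_mul,
      mul_comm, mul_div_assoc, div_self hfac, mul_one]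
  · rw [Nat.choose_eq_zero_of_lt h, genBinom,
      Finset.prod_eq_zero (Finset.mem_range.mpr h) (by simp)]
    simp

/-- Vandermonde's identity for natural arguments. -/
lemma genBinom_add_nat (M N n : ℕ) :
    genBinom ((M : ℂ) + (N : ℂ)) n
      = ∑ i ∈ Finset.range (n + 1), genBinom (M : ℂ) i * genBinom (N : ℂ) (n - i) := by
  have h := Nat.add_choose_eq M N n
  have h2 : ((M + N).choose n : ℂ) = ∑ i ∈ Finset.range (n + 1),
      (M.choose i : ℂ) * (N.choose (n - i) : ℂ) := by
    rw [h, Finset.Nat.sum_antidiagonal_eq_sum_range_succ_mk]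
    push_cast
    rfl
  rw [← Nat.cast_add, genBinom_natCast, h2]
  simp [genBinom_natCast]

lemma eq_of_nat_eval {P Q : ℂ[X]} (h : ∀ N : ℕ, P.eval (N : ℂ) = Q.eval (N : ℂ)) :
    P = Q := by
  apply Polynomial.eq_of_infinite_eval_eq
  apply Set.Infinite.mono (s := Set.range (Nat.cast : ℕ → ℂ))
  · rintro x ⟨N, rfl⟩; exact h N
  · exact Set.infinite_range_of_injective Nat.cast_injective

/-- Vandermonde's identity for the generalized binomial coefficients. -/
lemma genBinom_add (a b : ℂ) (n : ℕ) :
    genBinom (a + b) n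
      = ∑ i ∈ Finset.range (n + 1), genBinom a i * genBinom b (n - i) := by
  -- First: b a natural, a arbitrary
  have step1 : ∀ (N : ℕ) (a : ℂ), genBinom (a + (N : ℂ)) n
      = ∑ i ∈ Finset.range (n + 1), genBinom a i * genBinom (N : ℂ) (n - i) := by
    intro N a
    have hpoly : (genBinomPoly n).comp (X + Polynomial.C (N : ℂ))
        = ∑ i ∈ Finset.range (n + 1),
            genBinomPoly i * Polynomial.C (genBinom (N : ℂ) (n - i)) := by
      apply eq_of_nat_eval
      intro M
      simp only [eval_comp, eval_add, eval_X, eval_C, eval_finset_sum, eval_mul,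
        genBinomPoly_eval]
      exact genBinom_add_nat M N n
    have := congrArg (Polynomial.eval a) hpoly
    simpa only [eval_comp, eval_add, eval_X, eval_C, eval_finset_sum, eval_mul,
      genBinomPoly_eval] using this
  have hpoly : (genBinomPoly n).comp (Polynomial.C a + X)
      = ∑ i ∈ Finset.range (n + 1),
          Polynomial.C (genBinom a i) * genBinomPoly (n - i) := by
    apply eq_of_nat_eval
    intro N
    simp only [eval_comp, eval_add, eval_X, eval_C, eval_finset_sum, eval_mul,
      genBinomPoly_eval]
    exact step1 N a
  have := congrArg (Polynomial.eval b) hpoly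
  simpa only [eval_comp, eval_add, eval_X, eval_C, eval_finset_sum, eval_mul,
    genBinomPoly_eval] using this

lemma genBinom_zero (n : ℕ) : genBinom 0 n = if n = 0 then 1 else 0 := by
  cases n with
  | zero => simp [genBinom]
  | succ m =>
    rw [genBinom, Finset.prod_eq_zero (Finset.mem_range.mpr (Nat.succ_pos m)) (by simp)]
    simp

lemma genBinom_one (n : ℕ) :
    genBinom 1 n = if n = 0 then 1 else if n = 1 then 1 else 0 := by
  match n with
  | 0 => simp [genBinom]
  | 1 => simp [genBinom, Nat.factorial]
  | (m + 2) =>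
    rw [genBinom, Finset.prod_eq_zero (i := 1) (Finset.mem_range.mpr (by omega)) (by simp)]
    simp

lemma coeff_pow_genBinom (c : ℂ) (p : ℕ) (k : ℕ) :
    ∀ n < p, ((∑ i ∈ Finset.range p, Polynomial.C (genBinom c i) * X ^ i) ^ k).coeff n
      = genBinom ((k : ℂ) * c) n := by
  induction k with
  | zero =>
    intro n hn
    simp [genBinom_zero, Polynomial.coeff_one, eq_comm]
  | succ k ih =>
    intro n hn
    set f : ℂ[X] := ∑ i ∈ Finset.range p, Polynomial.C (genBinom c i) * X ^ i with hf
    have hcoef : ∀ i < p, f.coeff i = genBinom c i := by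
      intro i hi
      rw [hf, Polynomial.finset_sum_coeff]
      rw [Finset.sum_eq_single i]
      · simp
      · intro b _ hb
        rw [Polynomial.coeff_C_mul, Polynomial.coeff_X_pow, if_neg (fun h => hb h.symm), mul_zero]
      · intro h; exact absurd (Finset.mem_range.mpr hi) h
    rw [pow_succ, mul_comm, Polynomial.coeff_mul,
      Finset.Nat.sum_antidiagonal_eq_sum_range_succ_mk]
    have : ∀ i ∈ Finset.range (n + 1),
        f.coeff i * (f ^ k).coeff (n - i) = genBinom c i * genBinom ((k : ℂ) * c) (n - i) := by
      intro i hi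
      have hi' : i ≤ n := Nat.lt_succ_iff.mp (Finset.mem_range.mp hi)
      rw [hcoef i (lt_of_le_of_lt hi' hn), ih (n - i) (lt_of_le_of_lt (Nat.sub_le n i) hn)]
    rw [Finset.sum_congr rfl this, ← genBinom_add]
    congr 1
    push_cast
    ring

/-- identity (p3). For `ℓ, p ≥ 1`, `μ ≠ 0`, `ξ` an `ℓ`-th root of `μ`
and `T` a `p × p` nilpotent matrix with `T ^ p = 0`, the evaluation at `T` of the
degree-`(p-1)` Taylor partial sum
`g(λ) = Σ_{i=0}^{p-1} C(1/ℓ, i) ξ μ^{-i} λ^i` of the branch of `(μ + λ)^{1/ℓ}` taking the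
value `ξ` at `λ = 0` satisfies `g(T)^ℓ = μ I_p + T`. -/
theorem taylor_partial_sum_matrix_root {p : ℕ} (hp : 1 ≤ p) (ℓ : ℕ) (hℓ : 1 ≤ ℓ)
    (μ ξ : ℂ) (hμ : μ ≠ 0) (hξ : ξ ^ ℓ = μ)
    (T : Matrix (Fin p) (Fin p) ℂ) (hT : T ^ p = 0) :
    (∑ i ∈ Finset.range p, (genBinom ((ℓ : ℂ)⁻¹) i * ξ * (μ ^ i)⁻¹) • T ^ i) ^ ℓ
      = μ • (1 : Matrix (Fin p) (Fin p) ℂ) + T := by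
  have hℓ0 : (ℓ : ℂ) ≠ 0 := Nat.cast_ne_zero.mpr (by omega)
  set c : ℂ := (ℓ : ℂ)⁻¹ with hc
  set N : Matrix (Fin p) (Fin p) ℂ := μ⁻¹ • T with hNdef
  have hN : N ^ p = 0 := by rw [hNdef, _root_.smul_pow, hT, smul_zero]
  set f : ℂ[X] := ∑ i ∈ Finset.range p, Polynomial.C (genBinom c i) * X ^ i with hf
  have haev : Polynomial.aeval N f = ∑ i ∈ Finset.range p, genBinom c i • N ^ i := by
    rw [hf, map_sum]
    refine Finset.sum_congr rfl fun i _ => ?_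
    rw [map_mul, map_pow, Polynomial.aeval_X, Polynomial.aeval_C, Algebra.smul_def]
  have hsum : (∑ i ∈ Finset.range p, (genBinom c i * ξ * (μ ^ i)⁻¹) • T ^ i)
      = ξ • Polynomial.aeval N f := by
    rw [haev, Finset.smul_sum]
    refine Finset.sum_congr rfl fun i _ => ?_
    rw [hNdef, _root_.smul_pow, smul_smul, smul_smul, inv_pow]
    congr 1
    ring
  -- coefficients of f ^ ℓ below p agree with 1 + X
  have hco : ∀ n < p, ((f ^ ℓ - (1 + X)).coeff n) = 0 := by
    intro n hn
    rw [Polynomial.coeff_sub, coeff_pow_genBinom c p ℓ n hn, hc,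
      mul_inv_cancel₀ hℓ0, genBinom_one, Polynomial.coeff_add, Polynomial.coeff_one,
      Polynomial.coeff_X]
    rcases n with _ | _ | n <;> simp
  obtain ⟨q, hq⟩ := Polynomial.X_pow_dvd_iff.mpr hco
  have hpow : Polynomial.aeval N (f ^ ℓ) = 1 + N := by
    have h1 : Polynomial.aeval N (f ^ ℓ - (1 + X)) = 0 := by
      rw [hq, map_mul, map_pow, Polynomial.aeval_X, hN, zero_mul]
    have h2 : Polynomial.aeval N (f ^ ℓ) - (1 + N) = 0 := by
      simpa [map_sub, map_add, Polynomial.aeval_X] using h1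
    linear_combination (norm := module) h2
  calc (∑ i ∈ Finset.range p, (genBinom c i * ξ * (μ ^ i)⁻¹) • T ^ i) ^ ℓ
      = (ξ • Polynomial.aeval N f) ^ ℓ := by rw [hsum]
    _ = ξ ^ ℓ • (Polynomial.aeval N f) ^ ℓ := _root_.smul_pow _ _ _
    _ = μ • Polynomial.aeval N (f ^ ℓ) := by rw [hξ, map_pow]
    _ = μ • (1 + N) := by rw [hpow]
    _ = μ • (1 : Matrix (Fin p) (Fin p) ℂ) + T := by
        rw [smul_add, hNdef, smul_smul, mul_inv_cancel₀ hμ, one_smul]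
end

section
/- Let A be an n×n complex matrix and let ℓ be a natural number with ℓ > 1. Then there exists a function Q from ℂ to n×n complex matrices such that: (i) for every z ∈ ℂ for which A − z·Iₙ is invertible, Q(z)^ℓ = A − z·Iₙ; and (ii) for all real z₁, z₂ for which A − z₁·Iₙ and A − z₂·Iₙ are invertible, Q(z₁)Q(z₂) = Q(z₂)Q(z₁). -/
open Polynomial

lemma sq_zero_pow (R : Type) [CommRing R] (s : R) (hs : s * s = 0) (m : ℕ) :
    (1 + s) ^ m = 1 + m • s := by
  induction m with
  | zero => simp
  | succ m ih =>
    rw [pow_succ, ih, succ_nsmul, nsmul_eq_mul]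
    have : s ^ 2 = 0 := by rw [sq]; exact hs
    ring_nf
    rw [this]
    ring

lemma exists_pow_eq_one_add (ℓ : ℕ) (hℓ : 0 < ℓ) :
    ∀ (k : ℕ) (R : Type) [CommRing R] [Algebra ℂ R] (n : R),
      n ^ k = 0 → ∃ y : R, y ^ ℓ = 1 + n := by
  intro k
  induction k using Nat.strong_induction_on with
  | _ k ih =>
    intro R _ _ n hn
    match k, hn with
    | 0, hn =>
      have h10 : (1 : R) = 0 := by simpa using hn
      haveI : Subsingleton R := subsingleton_of_zero_eq_one h10.symm
      exact ⟨0, Subsingleton.elim _ _⟩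
    | 1, hn =>
      rw [pow_one] at hn
      exact ⟨1, by rw [hn, one_pow, add_zero]⟩
    | (k+2), hn =>
      have hjk : (k + 3) / 2 < k + 2 := by omega
      set j : ℕ := (k + 3) / 2 with hj
      have hnn : n ^ j * n ^ j = 0 := by
        rw [← pow_add]
        obtain ⟨m, hm⟩ : ∃ m, j + j = (k + 2) + m := ⟨j + j - (k+2), by omega⟩
        rw [hm, pow_add, hn, zero_mul]
      set I : Ideal R := Ideal.span {n ^ j} with hI
      have hnj : (Ideal.Quotient.mk I n) ^ j = 0 := by
        rw [← map_pow, Ideal.Quotient.eq_zero_iff_mem]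
        exact Ideal.subset_span rfl
      obtain ⟨y', hy'⟩ := ih j hjk (R ⧸ I) (Ideal.Quotient.mk I n) hnj
      obtain ⟨y₀, rfl⟩ := Ideal.Quotient.mk_surjective y'
      have hmem : y₀ ^ ℓ - (1 + n) ∈ I := by
        rw [← Ideal.Quotient.eq_zero_iff_mem, map_sub, map_pow, hy', map_add, map_one]
        ring
      obtain ⟨c, hc⟩ := Ideal.mem_span_singleton'.mp hmem
      set t : R := c * n ^ j with ht
      have hy₀ : y₀ ^ ℓ = 1 + n + t := by linear_combination -hc
      have ht2 : t * t = 0 := by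
        rw [ht, mul_mul_mul_comm, hnn, mul_zero]
      have hu : IsUnit (1 + n) := IsNilpotent.isUnit_one_add ⟨k + 2, hn⟩
      set t' : R := ↑hu.unit⁻¹ * t with ht'
      have hut' : (1 + n) * t' = t := by
        rw [ht', ← mul_assoc]
        rw [hu.mul_val_inv, one_mul]
      have htt' : t * t' = 0 := by
        rw [ht', mul_left_comm, ht2, mul_zero]
      have ht'2 : t' * t' = 0 := by
        rw [ht', mul_mul_mul_comm, ht2, mul_zero]
      set s : R := algebraMap ℂ R (-(ℓ : ℂ)⁻¹) * t' with hs
      have hss : s * s = 0 := by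
        rw [hs, mul_mul_mul_comm, ht'2, mul_zero]
      have hℓ0 : (ℓ : ℂ) ≠ 0 := Nat.cast_ne_zero.mpr hℓ.ne'
      have hℓs : ℓ • s = -t' := by
        rw [hs, nsmul_eq_mul, ← mul_assoc, ← map_natCast (algebraMap ℂ R) ℓ, ← map_mul]
        have : (ℓ : ℂ) * (-(ℓ : ℂ)⁻¹) = -1 := by field_simp
        rw [this]
        simp
      refine ⟨y₀ * (1 + s), ?_⟩
      rw [mul_pow, sq_zero_pow R s hss ℓ, hℓs, hy₀]
      linear_combination -hut' - htt'

lemma exists_pow_root_of_isUnit {R : Type} [CommRing R] [Algebra ℂ R] [FiniteDimensional ℂ R]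
    (ℓ : ℕ) (hℓ : 0 < ℓ) (u : R) (hu : IsUnit u) : ∃ v : R, v ^ ℓ = u := by
  classical
  have hint : IsIntegral ℂ u := IsIntegral.of_finite ℂ u
  set p := minpoly ℂ u with hp
  have hmonic : p.Monic := minpoly.monic hint
  have hsplit : p.Splits := IsAlgClosed.splits p
  have hprod : p = (p.roots.map fun a => X - C a).prod :=
    hsplit.eq_prod_roots_of_monic hmonic
  set T := p.roots.toFinset with hT
  set d := Multiset.card p.roots with hd
  have hroot : ∀ a : ℂ, ∃ b : ℂ, b ^ ℓ = a := fun a => IsAlgClosed.exists_pow_nat_eq a hℓ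
  choose f hf using hroot
  set q := Lagrange.interpolate T id f with hq
  have hg : ∀ a ∈ T, (q ^ ℓ - X).eval a = 0 := by
    intro a ha
    rw [eval_sub, eval_pow, eval_X, hq]
    have := Lagrange.eval_interpolate_at_node f (Set.injOn_id _) ha
    simp only [id] at this
    rw [this, hf, sub_self]
  have hsdvd : (∏ a ∈ T, (X - C a)) ∣ q ^ ℓ - X := by
    refine Finset.prod_dvd_of_coprime ?_ (fun a ha => (dvd_iff_isRoot).mpr (hg a ha))
    exact (Polynomial.pairwise_coprime_X_sub_C Function.injective_id).set_pairwise (T : Set ℂ)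
  have hpd : p ∣ (∏ a ∈ T, (X - C a)) ^ d := by
    have h1 : p = ∏ a ∈ T, (X - C a) ^ p.roots.count a :=
      hprod.trans (Finset.prod_multiset_map_count _ _)
    rw [← Finset.prod_pow]
    rw [h1]
    refine Finset.prod_dvd_prod_of_dvd _ _ ?_
    intro a _
    exact pow_dvd_pow _ (Multiset.count_le_card a _)
  obtain ⟨h, hh⟩ := hsdvd
  obtain ⟨w', hw'⟩ := hpd
  set e : R := (aeval u q) ^ ℓ - u with he0
  have he : e = aeval u (q ^ ℓ - X) := by rw [he0, map_sub, map_pow, aeval_X]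
  have hed : e ^ d = 0 := by
    rw [he, ← map_pow, hh, mul_pow, hw', mul_assoc, map_mul, minpoly.aeval, zero_mul]
  set n' : R := ↑hu.unit⁻¹ * e with hn'0
  have hn' : n' ^ d = 0 := by rw [hn'0, mul_pow, hed, mul_zero]
  obtain ⟨w, hw⟩ := exists_pow_eq_one_add ℓ hℓ d R n' hn'
  have hwu : IsUnit w := by
    have : IsUnit (w ^ ℓ) := by rw [hw]; exact IsNilpotent.isUnit_one_add ⟨d, hn'⟩
    exact (isUnit_pow_iff hℓ.ne').mp this
  refine ⟨aeval u q * ↑hwu.unit⁻¹, ?_⟩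
  have key : (aeval u q * ↑hwu.unit⁻¹) ^ ℓ * w ^ ℓ = u * w ^ ℓ := by
    rw [mul_pow, mul_assoc, ← mul_pow, hwu.val_inv_mul, one_pow, mul_one, hw]
    have h3 : u * (1 + n') = u + e := by
      rw [mul_add, mul_one, hn'0, ← mul_assoc, hu.mul_val_inv, one_mul]
    rw [h3]
    linear_combination he0
  exact (hwu.pow ℓ).mul_right_cancel key

set_option synthInstance.maxHeartbeats 1000000 in
set_option maxHeartbeats 2000000 in
/-- Corollary of Section 2. For any `n × n` complex matrix `A` and any
`ℓ > 1`, there is a family `Q : ℂ → ℂ^{n×n}` such that `Q(z)^ℓ = A - z Iₙ` whenever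
`A - z Iₙ` is invertible, and `Q(z₁) Q(z₂) = Q(z₂) Q(z₁)` for all real `z₁, z₂` with
`A - z₁ Iₙ`, `A - z₂ Iₙ` invertible. -/
theorem commuting_family_of_roots {n : ℕ} (A : Matrix (Fin n) (Fin n) ℂ)
    (ℓ : ℕ) (hℓ : 1 < ℓ) :
    ∃ Q : ℂ → Matrix (Fin n) (Fin n) ℂ,
      (∀ z : ℂ, IsUnit (A - z • (1 : Matrix (Fin n) (Fin n) ℂ)) →
        (Q z) ^ ℓ = A - z • (1 : Matrix (Fin n) (Fin n) ℂ)) ∧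
      (∀ z₁ z₂ : ℝ, IsUnit (A - (z₁ : ℂ) • (1 : Matrix (Fin n) (Fin n) ℂ)) →
        IsUnit (A - (z₂ : ℂ) • (1 : Matrix (Fin n) (Fin n) ℂ)) →
        Q (z₁ : ℂ) * Q (z₂ : ℂ) = Q (z₂ : ℂ) * Q (z₁ : ℂ)) := by
  classical
  set S : Subalgebra ℂ (Matrix (Fin n) (Fin n) ℂ) := Algebra.adjoin ℂ {A} with hS
  letI : CommRing S := Algebra.adjoinCommRingOfComm ℂ (by
    rintro a ha b hb
    rw [Set.mem_singleton_iff] at ha hb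
    rw [ha, hb])
  haveI : FiniteDimensional ℂ S := inferInstance
  have coe_mul : ∀ a b : S, ((a * b : S) : Matrix (Fin n) (Fin n) ℂ)
      = (a : Matrix (Fin n) (Fin n) ℂ) * (b : Matrix (Fin n) (Fin n) ℂ) := fun a b => rfl
  have coe_pow : ∀ (y : S) (m : ℕ), ((y ^ m : S) : Matrix (Fin n) (Fin n) ℂ)
      = (y : Matrix (Fin n) (Fin n) ℂ) ^ m := by
    intro y m
    induction m with
    | zero => simp [pow_zero]
    | succ m ih => rw [pow_succ, pow_succ, coe_mul, ih]
  have hmem : ∀ z : ℂ, A - z • (1 : Matrix (Fin n) (Fin n) ℂ) ∈ S := fun z =>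
    sub_mem (Algebra.subset_adjoin (Set.mem_singleton A)) (S.smul_mem S.one_mem z)
  let x : ℂ → S := fun z => ⟨A - z • (1 : Matrix (Fin n) (Fin n) ℂ), hmem z⟩
  have hxu : ∀ z : ℂ, IsUnit (A - z • (1 : Matrix (Fin n) (Fin n) ℂ)) → IsUnit (x z) := by
    intro z hz
    let φ : S →ₗ[ℂ] S := LinearMap.mulLeft ℂ (x z)
    have hinj : Function.Injective φ := by
      intro a b hab
      simp only [φ, LinearMap.mulLeft_apply] at hab
      have hab' := congrArg Subtype.val hab
      exact Subtype.ext (hz.mul_left_cancel hab')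
    obtain ⟨y, hy⟩ := (LinearMap.injective_iff_surjective.mp hinj) 1
    simp only [φ, LinearMap.mulLeft_apply] at hy
    exact IsUnit.of_mul_eq_one y hy
  have hvex : ∀ z, IsUnit (A - z • (1 : Matrix (Fin n) (Fin n) ℂ)) → ∃ v : S, v ^ ℓ = x z :=
    fun z hz => exists_pow_root_of_isUnit ℓ (by omega) (x z) (hxu z hz)
  choose v hv using hvex
  refine ⟨fun z => if h : IsUnit (A - z • (1 : Matrix (Fin n) (Fin n) ℂ)) then ↑(v z h) else 0,
    ?_, ?_⟩
  · intro z hz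
    dsimp only
    rw [dif_pos hz, ← coe_pow, hv]
  · intro z₁ z₂ h1 h2
    dsimp only
    rw [dif_pos h1, dif_pos h2, ← coe_mul, ← coe_mul, mul_comm]
end

section
/- Assume the generalised Hamiltonian GBDT setup. If A·S(0) − S(0)·A* = i·Π(0)·j·Π(0)*, then A·S(x) − S(x)·A* = i·Π(x)·j·Π(x)* for every x ∈ ℝ. -/
open Matrix

attribute [local instance] Matrix.normedAddCommGroup Matrix.normedSpace

/-- The signature matrix `j = diag(I_{m₁}, −I_{m₂})`. -/
def Jmat (m₁ m₂ : ℕ) : Matrix (Fin m₁ ⊕ Fin m₂) (Fin m₁ ⊕ Fin m₂) ℂ :=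
  Matrix.fromBlocks 1 0 0 (-1)

lemma Jmat_herm (m₁ m₂ : ℕ) : (Jmat m₁ m₂)ᴴ = Jmat m₁ m₂ := by
  simp [Jmat, Matrix.fromBlocks_conjTranspose]

/-- Per-summand algebraic identity. -/
lemma gbdt_key {n : ℕ} {M : Type*} [Fintype M] [DecidableEq M]
    (A : Matrix (Fin n) (Fin n) ℂ) (c : ℝ)
    (hA : IsUnit (A - (c : ℂ) • (1 : Matrix (Fin n) (Fin n) ℂ)))
    (P : Matrix (Fin n) M ℂ) (J H : Matrix M M ℂ) (hJ : Jᴴ = J) (hH : Hᴴ = H) :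
    ((A - (c:ℂ) • 1)⁻¹ * P * (J * H) * J * Pᴴ * (Aᴴ - (c:ℂ) • 1)⁻¹) * Aᴴ
      - A * ((A - (c:ℂ) • 1)⁻¹ * P * (J * H) * J * Pᴴ * (Aᴴ - (c:ℂ) • 1)⁻¹)
    = ((A - (c:ℂ) • 1)⁻¹ * P * (J * H)) * J * Pᴴ
      - P * J * ((A - (c:ℂ) • 1)⁻¹ * P * (J * H))ᴴ := by
  set E := A - (c:ℂ) • (1 : Matrix (Fin n) (Fin n) ℂ) with hE
  have hdet : IsUnit E.det := (Matrix.isUnit_iff_isUnit_det E).mp hA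
  have hEH : Eᴴ = Aᴴ - (c:ℂ) • 1 := by
    simp [hE, Matrix.conjTranspose_smul]
  have hinv : (Aᴴ - (c:ℂ) • 1)⁻¹ = (E⁻¹)ᴴ := by
    rw [Matrix.conjTranspose_nonsing_inv, hEH]
  have h1 : E * E⁻¹ = 1 := Matrix.mul_nonsing_inv E hdet
  have h3 : (E⁻¹)ᴴ * Eᴴ = 1 := by
    rw [← Matrix.conjTranspose_mul, h1, Matrix.conjTranspose_one]
  have hA' : A = E + (c:ℂ) • 1 := by rw [hE]; abel
  have hAH : Aᴴ = Eᴴ + (c:ℂ) • 1 := by rw [hEH]; abel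
  rw [hinv, hAH, hA']
  have hTH : (E⁻¹ * P * (J * H))ᴴ = H * J * Pᴴ * (E⁻¹)ᴴ := by
    simp only [Matrix.conjTranspose_mul, hJ, hH, Matrix.mul_assoc]
  rw [hTH]
  simp only [add_mul, mul_add, Matrix.smul_mul, Matrix.mul_smul, one_mul, mul_one]
  have e1 : E * (E⁻¹ * P * (J * H) * J * Pᴴ * (E⁻¹)ᴴ) = P * (J * H) * J * Pᴴ * (E⁻¹)ᴴ := by
    simp only [← Matrix.mul_assoc, h1, Matrix.one_mul]
  have e2 : E⁻¹ * P * (J * H) * J * Pᴴ * (E⁻¹)ᴴ * Eᴴ = E⁻¹ * P * (J * H) * J * Pᴴ := by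
    rw [Matrix.mul_assoc _ ((E⁻¹)ᴴ) (Eᴴ), h3, Matrix.mul_one]
  rw [e1, e2]
  simp only [Matrix.mul_assoc]
  abel

/-- propagation of the identity (c7). In the generalised Hamiltonian
GBDT setup, if `A S(0) − S(0) A* = i Π(0) j Π(0)*`, then
`A S(x) − S(x) A* = i Π(x) j Π(x)*` for every `x ∈ ℝ`. -/
theorem gbdt_identity_propagation {m₁ m₂ n p r : ℕ} (hm : 0 < m₁ + m₂) (hr : 1 ≤ r)
    (c : Fin r → ℝ) (hc : Function.Injective c)
    (A : Matrix (Fin n) (Fin n) ℂ)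
    (hA : ∀ k, IsUnit (A - (c k : ℂ) • (1 : Matrix (Fin n) (Fin n) ℂ)))
    (β : Fin r → ℝ → Matrix (Fin p) (Fin m₁ ⊕ Fin m₂) ℂ)
    (hβ : ∀ k, Continuous (β k))
    (P : ℝ → Matrix (Fin n) (Fin m₁ ⊕ Fin m₂) ℂ)
    (S : ℝ → Matrix (Fin n) (Fin n) ℂ)
    (hP : ∀ x : ℝ, HasDerivAt P
      (-(Complex.I • ∑ k : Fin r,
        (A - (c k : ℂ) • 1)⁻¹ * P x * (Jmat m₁ m₂ * ((β k x)ᴴ * β k x)))) x)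
    (hS : ∀ x : ℝ, HasDerivAt S
      (-(∑ k : Fin r,
        (A - (c k : ℂ) • 1)⁻¹ * P x * (Jmat m₁ m₂ * ((β k x)ᴴ * β k x)) * Jmat m₁ m₂ *
          (P x)ᴴ * (Aᴴ - (c k : ℂ) • 1)⁻¹)) x)
    (hS0 : A * S 0 - S 0 * Aᴴ = Complex.I • (P 0 * Jmat m₁ m₂ * (P 0)ᴴ)) :
    ∀ x : ℝ, A * S x - S x * Aᴴ = Complex.I • (P x * Jmat m₁ m₂ * (P x)ᴴ) := by
  set J := Jmat m₁ m₂ with hJdef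
  have hJ : Jᴴ = J := Jmat_herm m₁ m₂
  let L : Matrix (Fin n) (Fin n) ℂ →L[ℝ] Matrix (Fin n) (Fin n) ℂ :=
    LinearMap.toContinuousLinearMap
      { toFun := fun X => A * X - X * Aᴴ
        map_add' := by intro X Y; noncomm_ring
        map_smul' := by intro s X; simp [Matrix.mul_smul, Matrix.smul_mul, smul_sub] }
  let B0 : Matrix (Fin n) (Fin m₁ ⊕ Fin m₂) ℂ →ₗ[ℝ] Matrix (Fin n) (Fin m₁ ⊕ Fin m₂) ℂ
      →ₗ[ℝ] Matrix (Fin n) (Fin n) ℂ :=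
    LinearMap.mk₂ ℝ (fun X Y => Complex.I • (X * J * Yᴴ))
      (by intro X X' Y; simp [Matrix.add_mul, smul_add])
      (by intro s X Y
          simp only [Matrix.smul_mul]
          rw [smul_comm])
      (by intro X Y Y'; simp [Matrix.mul_add, smul_add])
      (by intro s X Y
          have hh : (s • Y)ᴴ = s • Yᴴ := by ext i j; simp [Matrix.conjTranspose_apply]
          simp only [hh, Matrix.mul_smul]
          rw [smul_comm])
  let B : Matrix (Fin n) (Fin m₁ ⊕ Fin m₂) ℂ →L[ℝ] Matrix (Fin n) (Fin m₁ ⊕ Fin m₂) ℂ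
      →L[ℝ] Matrix (Fin n) (Fin n) ℂ :=
    LinearMap.toContinuousLinearMap
      { toFun := fun X => LinearMap.toContinuousLinearMap (B0 X)
        map_add' := by
          intro X X'
          show LinearMap.toContinuousLinearMap (B0 (X + X')) = _
          rw [map_add]
          exact map_add _ _ _
        map_smul' := by
          intro s X
          show LinearMap.toContinuousLinearMap (B0 (s • X)) = _
          rw [_root_.map_smul]
          rfl }
  set F : ℝ → Matrix (Fin n) (Fin n) ℂ := fun x => L (S x) - B (P x) (P x) with hFdef
  have hF : ∀ x, HasDerivAt F 0 x := by
    intro x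
    set P' := -(Complex.I • ∑ k : Fin r,
        (A - (c k : ℂ) • 1)⁻¹ * P x * (J * ((β k x)ᴴ * β k x))) with hP'def
    set S' := -(∑ k : Fin r,
        (A - (c k : ℂ) • 1)⁻¹ * P x * (J * ((β k x)ᴴ * β k x)) * J *
          (P x)ᴴ * (Aᴴ - (c k : ℂ) • 1)⁻¹) with hS'def
    have h1 : HasDerivAt (fun y => L (S y))
        ((0 : Matrix (Fin n) (Fin n) ℂ →L[ℝ] Matrix (Fin n) (Fin n) ℂ) (S x) + L S') x :=
      (by rw [ContinuousLinearMap.zero_apply, zero_add]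
          exact L.hasFDerivAt.comp_hasDerivAt x (hS x))
    have h2 : HasDerivAt (fun y => B (P y) (P y))
        (((0 : Matrix (Fin n) (Fin m₁ ⊕ Fin m₂) ℂ →L[ℝ]
            (Matrix (Fin n) (Fin m₁ ⊕ Fin m₂) ℂ →L[ℝ] Matrix (Fin n) (Fin n) ℂ)) (P x)
          + B P') (P x) + B (P x) P') x :=
      (by rw [ContinuousLinearMap.zero_apply, zero_add]
          rw [add_comm]
          exact B.hasDerivAt_of_bilinear (fun _ => hP x) (fun _ => hP x))
    have h3 := h1.sub h2
    convert h3 using 1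
    · rfl
    · rfl
    · rfl
    · rfl
    simp only [ContinuousLinearMap.zero_apply, zero_add, ContinuousLinearMap.add_apply]
    set T : Fin r → Matrix (Fin n) (Fin m₁ ⊕ Fin m₂) ℂ :=
      fun k => (A - (c k : ℂ) • 1)⁻¹ * P x * (J * ((β k x)ᴴ * β k x)) with hTdef
    have key : ∀ k : Fin r,
        (T k * J * (P x)ᴴ * (Aᴴ - (c k : ℂ) • 1)⁻¹) * Aᴴ
          - A * (T k * J * (P x)ᴴ * (Aᴴ - (c k : ℂ) • 1)⁻¹)
        = T k * J * (P x)ᴴ - P x * J * (T k)ᴴ := by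
      intro k
      exact gbdt_key A (c k) (hA k) (P x) J ((β k x)ᴴ * β k x) hJ
        (by simp [Matrix.conjTranspose_mul, Matrix.mul_assoc])
    have hL : L S' = ∑ k : Fin r, (T k * J * (P x)ᴴ - P x * J * (T k)ᴴ) := by
      show A * S' - S' * Aᴴ = _
      rw [hS'def]
      calc A * -(∑ k : Fin r, T k * J * (P x)ᴴ * (Aᴴ - (c k : ℂ) • 1)⁻¹)
            - -(∑ k : Fin r, T k * J * (P x)ᴴ * (Aᴴ - (c k : ℂ) • 1)⁻¹) * Aᴴ
          = ∑ k : Fin r, ((T k * J * (P x)ᴴ * (Aᴴ - (c k : ℂ) • 1)⁻¹) * Aᴴ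
              - A * (T k * J * (P x)ᴴ * (Aᴴ - (c k : ℂ) • 1)⁻¹)) := by
            rw [Finset.sum_sub_distrib]
            simp only [Matrix.mul_neg, Matrix.neg_mul, Matrix.mul_sum, Matrix.sum_mul]
            abel
        _ = ∑ k : Fin r, (T k * J * (P x)ᴴ - P x * J * (T k)ᴴ) :=
            Finset.sum_congr rfl fun k _ => key k
    have hB1 : B P' (P x) = ∑ k : Fin r, T k * J * (P x)ᴴ := by
      show Complex.I • (P' * J * (P x)ᴴ) = _
      rw [hP'def]
      simp only [Matrix.neg_mul, smul_neg, Matrix.smul_mul, smul_smul,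
        Complex.I_mul_I, neg_smul, neg_neg, one_smul, Matrix.sum_mul]
    have hB2 : B (P x) P' = -(∑ k : Fin r, P x * J * (T k)ᴴ) := by
      show Complex.I • (P x * J * P'ᴴ) = _
      rw [hP'def]
      have hct : (-(Complex.I • ∑ k : Fin r, T k))ᴴ
          = Complex.I • ∑ k : Fin r, (T k)ᴴ := by
        simp [Matrix.conjTranspose_smul, Matrix.conjTranspose_sum]
      rw [hct]
      simp only [Matrix.mul_smul, smul_smul, Complex.I_mul_I, neg_smul, one_smul,
        Matrix.mul_sum, neg_neg]
    rw [hL, hB1, hB2, Finset.sum_sub_distrib]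
    abel
  have hconst : ∀ x : ℝ, F x = F 0 := by
    intro x
    exact is_const_of_deriv_eq_zero (fun y => (hF y).differentiableAt)
      (fun y => (hF y).deriv) x 0
  intro x
  have hF0 : F 0 = 0 := by
    show L (S 0) - B (P 0) (P 0) = 0
    have : L (S 0) = A * S 0 - S 0 * Aᴴ := rfl
    rw [this, hS0]
    have : B (P 0) (P 0) = Complex.I • (P 0 * J * (P 0)ᴴ) := rfl
    rw [this, sub_self]
  have hx : F x = 0 := (hconst x).trans hF0
  have : L (S x) - B (P x) (P x) = 0 := hx
  have h4 : L (S x) = A * S x - S x * Aᴴ := rfl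
  have h5 : B (P x) (P x) = Complex.I • (P x * J * (P x)ᴴ) := rfl
  rw [h4, h5] at this
  exact sub_eq_zero.mp this
end

section
/- Let A ∈ ℂ^{n×n}, let S ∈ ℂ^{n×n} be invertible, let Π ∈ ℂ^{n×m}, let j = diag(I_{m₁}, −I_{m₂}) with m = m₁ + m₂, and let c ∈ ℝ be such that A − c·Iₙ and A* − c·Iₙ are both invertible. Assume the identity A·S − S·A* = i·Π·j·Π*. Then (I_m − i·j·Π*·S⁻¹·(A − cIₙ)⁻¹·Π)·(I_m + i·j·Π*·(A* − cIₙ)⁻¹·S⁻¹·Π) = I_m. -/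
open Matrix

/-- inverse formula (c11), cf. [SaSaR, (1.76)]. If
`A S − S A* = i Π j Π*`, `S` is invertible and `A − c Iₙ`, `A* − c Iₙ` are invertible
(`c ∈ ℝ`), then
`(I − i j Π* S⁻¹ (A − cIₙ)⁻¹ Π) (I + i j Π* (A* − cIₙ)⁻¹ S⁻¹ Π) = I`. -/
theorem transfer_matrix_inverse_formula {m₁ m₂ n : ℕ}
    (A S : Matrix (Fin n) (Fin n) ℂ) (hS : IsUnit S)
    (P : Matrix (Fin n) (Fin m₁ ⊕ Fin m₂) ℂ) (c : ℝ)
    (hA : IsUnit (A - (c : ℂ) • (1 : Matrix (Fin n) (Fin n) ℂ)))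
    (hA' : IsUnit (Aᴴ - (c : ℂ) • (1 : Matrix (Fin n) (Fin n) ℂ)))
    (hid : A * S - S * Aᴴ = Complex.I • (P * Jmat m₁ m₂ * Pᴴ)) :
    (1 - Complex.I • (Jmat m₁ m₂ * Pᴴ * S⁻¹ * (A - (c : ℂ) • 1)⁻¹ * P)) *
      (1 + Complex.I • (Jmat m₁ m₂ * Pᴴ * (Aᴴ - (c : ℂ) • 1)⁻¹ * S⁻¹ * P)) = 1 := by
  set j := Jmat m₁ m₂ with hj
  set B := A - (c : ℂ) • (1 : Matrix (Fin n) (Fin n) ℂ) with hBdef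
  set B' := Aᴴ - (c : ℂ) • (1 : Matrix (Fin n) (Fin n) ℂ) with hB'def
  have hSd := (Matrix.isUnit_iff_isUnit_det S).mp hS
  have hBd := (Matrix.isUnit_iff_isUnit_det B).mp hA
  have hB'd := (Matrix.isUnit_iff_isUnit_det B').mp hA'
  have cS2 : ∀ M : Matrix (Fin n) (Fin m₁ ⊕ Fin m₂) ℂ, S⁻¹ * (S * M) = M := fun M => by
    rw [← Matrix.mul_assoc, Matrix.nonsing_inv_mul _ hSd, Matrix.one_mul]
  have cS : ∀ M : Matrix (Fin n) (Fin m₁ ⊕ Fin m₂) ℂ, S * (S⁻¹ * M) = M := fun M => by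
    rw [← Matrix.mul_assoc, Matrix.mul_nonsing_inv _ hSd, Matrix.one_mul]
  have cB : ∀ M : Matrix (Fin n) (Fin m₁ ⊕ Fin m₂) ℂ, B⁻¹ * (B * M) = M := fun M => by
    rw [← Matrix.mul_assoc, Matrix.nonsing_inv_mul _ hBd, Matrix.one_mul]
  have cB' : ∀ M : Matrix (Fin n) (Fin m₁ ⊕ Fin m₂) ℂ, B' * (B'⁻¹ * M) = M := fun M => by
    rw [← Matrix.mul_assoc, Matrix.mul_nonsing_inv _ hB'd, Matrix.one_mul]
  set X := j * Pᴴ * S⁻¹ * B⁻¹ * P with hX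
  set Y := j * Pᴴ * B'⁻¹ * S⁻¹ * P with hY
  have hPP : Complex.I • (P * j * Pᴴ) = B * S - S * B' := by
    rw [← hid, hBdef, hB'def, Matrix.sub_mul, Matrix.mul_sub, Matrix.smul_mul,
      Matrix.mul_smul, Matrix.one_mul, Matrix.mul_one]
    abel
  have key : Complex.I • (X * Y) = Y - X := by
    have e1 : Complex.I • (X * Y)
        = j * (Pᴴ * (S⁻¹ * (B⁻¹ * ((Complex.I • (P * j * Pᴴ)) * (B'⁻¹ * (S⁻¹ * P)))))) := by
      rw [hX, hY]
      simp only [Matrix.mul_smul, Matrix.smul_mul, Matrix.mul_assoc]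
    rw [e1, hPP, Matrix.sub_mul, Matrix.mul_sub, Matrix.mul_sub, Matrix.mul_sub, Matrix.mul_sub]
    rw [hX, hY]
    simp only [Matrix.mul_assoc, cS, cB, cB', cS2]
  have hXY : X * Y = Complex.I • X - Complex.I • Y := by
    have h := congrArg (fun M => (-Complex.I) • M) key
    simp only [smul_smul, neg_mul, Complex.I_mul_I, neg_neg, one_smul, smul_sub, neg_smul] at h
    rw [h]; abel
  rw [sub_mul, mul_add, mul_add, one_mul, one_mul, mul_one, smul_mul_assoc,
    Matrix.mul_smul, smul_smul, Complex.I_mul_I, hXY]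
  simp [sub_eq_iff_eq_add]
end

section
/- Let p, n ∈ ℕ with p ≥ 1, set m₁ = m₂ = p, m = 2p, j = diag(I_p, −I_p). Let β₁, β₂ ∈ ℂ^{p×2p} satisfy β₁·j·β₁* = 0, β₂·j·β₂* = 0, and β₁·j·β₂* = I_p. Let c₁ ≠ c₂ be real numbers and A ∈ ℂ^{n×n} with A − c₁Iₙ and A − c₂Iₙ invertible. Let Q ∈ ℂ^{n×n} satisfy Q² = (A − c₁Iₙ)⁻¹·(A − c₂Iₙ)⁻¹, and let h₁, h₂ ∈ ℂ^{n×p}. Define Φ₁(x) := e^{ixQ}h₁ + e^{−ixQ}h₂, Φ₂(x) := −(A − c₂Iₙ)·Q·(e^{ixQ}h₁ − e^{−ixQ}h₂), and Π(x) := [Φ₁(x) Φ₂(x)]·[β₂ ; β₁] (the n×2p matrix [Φ₁ Φ₂] times the 2p×2p matrix obtained by stacking β₂ above β₁). Then Π is differentiable and Π′(x) = −i·Σ_{k=1}^{2} (A − cₖIₙ)⁻¹·Π(x)·j·Hₖ for all x ∈ ℝ, where Hₖ := βₖ*·βₖ. -/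
set_option maxHeartbeats 1000000


open Matrix

section AuxEntry

attribute [local instance] Matrix.linftyOpNormedAddCommGroup Matrix.linftyOpNormedRing
  Matrix.linftyOpNormedAlgebra

/-- Entrywise derivative of `u ↦ exp(u • B)` for matrices. -/
theorem aux_entry_deriv {n : ℕ} (B : Matrix (Fin n) (Fin n) ℂ) (x : ℝ) (i j : Fin n) :
    HasDerivAt (fun u : ℝ => NormedSpace.exp (u • B) i j)
      ((NormedSpace.exp ((x : ℝ) • B) * B) i j) x := by
  have h := hasDerivAt_exp_smul_const (𝕂 := ℝ) (𝔸 := Matrix (Fin n) (Fin n) ℂ) B x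
  have h' : HasDerivAt (fun u : ℝ => NormedSpace.exp (u • B))
      (NormedSpace.exp ((x : ℝ) • B) * B) x := h
  let l : Matrix (Fin n) (Fin n) ℂ →ₗ[ℝ] ℂ :=
    { toFun := fun M => M i j
      map_add' := fun _ _ => rfl
      map_smul' := fun _ _ => rfl }
  exact l.toContinuousLinearMap.hasFDerivAt.comp_hasDerivAt x h'

end AuxEntry

attribute [local instance] Matrix.normedAddCommGroup Matrix.normedSpace

/-- Derivative of `u ↦ exp(u • B)` with respect to the entrywise sup norm. -/
theorem aux_exp_deriv {n : ℕ} (B : Matrix (Fin n) (Fin n) ℂ) (x : ℝ) :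
    HasDerivAt (fun u : ℝ => NormedSpace.exp (u • B))
      (NormedSpace.exp ((x : ℝ) • B) * B) x :=
  hasDerivAt_pi.mpr fun i => hasDerivAt_pi.mpr fun j => aux_entry_deriv B x i j

/-- The linear map `Y ↦ M * Y * N`. -/
noncomputable def sandwichL {n : ℕ} {q : Type*} [Fintype q]
    (M : Matrix (Fin n) (Fin n) ℂ) (N : Matrix (Fin n) q ℂ) :
    Matrix (Fin n) (Fin n) ℂ →ₗ[ℝ] Matrix (Fin n) q ℂ where
  toFun Y := M * Y * N
  map_add' Y Z := by
    show M * (Y + Z) * N = M * Y * N + M * Z * N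
    rw [Matrix.mul_add, Matrix.add_mul]
  map_smul' c Y := by
    show M * (c • Y) * N = c • (M * Y * N)
    rw [Matrix.mul_smul, Matrix.smul_mul]

theorem sandwich_hasDerivAt {n : ℕ} {q : Type*} [Fintype q] [DecidableEq q]
    (M : Matrix (Fin n) (Fin n) ℂ) (N : Matrix (Fin n) q ℂ)
    {g : ℝ → Matrix (Fin n) (Fin n) ℂ} {g' : Matrix (Fin n) (Fin n) ℂ} {x : ℝ}
    (hg : HasDerivAt g g' x) :
    HasDerivAt (fun y => M * g y * N) (M * g' * N) x :=
  (sandwichL M N).toContinuousLinearMap.hasFDerivAt.comp_hasDerivAt x hg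

/-- Proposition 3.5. For `r = 2`, `m₁ = m₂ = p`, constant `β₁, β₂` with
`βₖ j βₖ* = 0` and `β₁ j β₂* = I_p`, and `Q² = (A − c₁Iₙ)⁻¹(A − c₂Iₙ)⁻¹`, the matrix
function `Π(x) = [Φ₁(x) Φ₂(x)]·[β₂ ; β₁]`, with
`Φ₁(x) = e^{ixQ}h₁ + e^{−ixQ}h₂` and `Φ₂(x) = −(A − c₂Iₙ) Q (e^{ixQ}h₁ − e^{−ixQ}h₂)`,
solves `Π′(x) = −i Σ_{k=1}^{2} (A − cₖIₙ)⁻¹ Π(x) j Hₖ`, where `Hₖ = βₖ* βₖ`. -/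
theorem explicit_generalised_eigenfunction {p n : ℕ} (hp : 1 ≤ p)
    (β₁ β₂ : Matrix (Fin p) (Fin p ⊕ Fin p) ℂ)
    (h11 : β₁ * Jmat p p * β₁ᴴ = 0) (h22 : β₂ * Jmat p p * β₂ᴴ = 0)
    (h12 : β₁ * Jmat p p * β₂ᴴ = 1)
    (c₁ c₂ : ℝ) (hc : c₁ ≠ c₂)
    (A : Matrix (Fin n) (Fin n) ℂ)
    (hA1 : IsUnit (A - (c₁ : ℂ) • (1 : Matrix (Fin n) (Fin n) ℂ)))
    (hA2 : IsUnit (A - (c₂ : ℂ) • (1 : Matrix (Fin n) (Fin n) ℂ)))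
    (Q : Matrix (Fin n) (Fin n) ℂ)
    (hQ : Q ^ 2 = (A - (c₁ : ℂ) • 1)⁻¹ * (A - (c₂ : ℂ) • 1)⁻¹)
    (h₁ h₂ : Matrix (Fin n) (Fin p) ℂ) :
    let Φ₁ : ℝ → Matrix (Fin n) (Fin p) ℂ := fun x =>
      NormedSpace.exp ((Complex.I * (x : ℂ)) • Q) * h₁ +
        NormedSpace.exp (-((Complex.I * (x : ℂ)) • Q)) * h₂
    let Φ₂ : ℝ → Matrix (Fin n) (Fin p) ℂ := fun x =>
      -((A - (c₂ : ℂ) • 1) * Q *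
        (NormedSpace.exp ((Complex.I * (x : ℂ)) • Q) * h₁ -
          NormedSpace.exp (-((Complex.I * (x : ℂ)) • Q)) * h₂))
    let P : ℝ → Matrix (Fin n) (Fin p ⊕ Fin p) ℂ := fun x =>
      fromCols (Φ₁ x) (Φ₂ x) * fromRows β₂ β₁
    ∀ x : ℝ, HasDerivAt P
      (-(Complex.I •
        ((A - (c₁ : ℂ) • 1)⁻¹ * P x * (Jmat p p * (β₁ᴴ * β₁)) +
          (A - (c₂ : ℂ) • 1)⁻¹ * P x * (Jmat p p * (β₂ᴴ * β₂))))) x := by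
  intro Φ₁ Φ₂ P x
  classical
  set A₁ := A - (c₁ : ℂ) • (1 : Matrix (Fin n) (Fin n) ℂ) with hA₁def
  set A₂ := A - (c₂ : ℂ) • (1 : Matrix (Fin n) (Fin n) ℂ) with hA₂def
  set B := Complex.I • Q with hBdef
  -- rewrite the exponent
  have hkey : ∀ y : ℝ, (Complex.I * (y : ℂ)) • Q = y • B := by
    intro y
    ext i j
    simp [hBdef, Matrix.smul_apply, Complex.real_smul]
    ring
  have hkey' : ∀ y : ℝ, -((Complex.I * (y : ℂ)) • Q) = y • (-B) := by
    intro y; rw [hkey, smul_neg]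
  set E : ℝ → Matrix (Fin n) (Fin n) ℂ := fun y => NormedSpace.exp (y • B) with hEdef
  set F : ℝ → Matrix (Fin n) (Fin n) ℂ := fun y => NormedSpace.exp (y • (-B)) with hFdef
  have hE : HasDerivAt E (E x * B) x := aux_exp_deriv B x
  have hF : HasDerivAt F (F x * (-B)) x := aux_exp_deriv (-B) x
  -- commutation of exp with Q
  have hQB : Commute Q B := (Commute.refl Q).smul_right _
  have hQE : Q * E x = E x * Q := by
    have : Commute (x • B) Q := ((hQB.symm).smul_left x)
    exact ((this.exp_left).symm).eq
  have hQF : Q * F x = F x * Q := by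
    have : Commute (x • (-B)) Q := (((hQB.neg_right).symm).smul_left x)
    exact ((this.exp_left).symm).eq
  -- the structure of P
  have hPfun : P = fun y =>
      (1 : Matrix (Fin n) (Fin n) ℂ) * E y * (h₁ * β₂) + 1 * F y * (h₂ * β₂) +
        (-(A₂ * Q)) * E y * (h₁ * β₁) + (A₂ * Q) * F y * (h₂ * β₁) := by
    funext y
    show fromCols (Φ₁ y) (Φ₂ y) * fromRows β₂ β₁ = _
    rw [fromCols_mul_fromRows]
    simp only [Φ₁, Φ₂]
    rw [← hA₂def, hkey y]
    simp only [hEdef, hFdef, smul_neg]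
    simp only [Matrix.add_mul, Matrix.sub_mul, Matrix.neg_mul, Matrix.mul_sub, Matrix.one_mul,
      Matrix.mul_assoc, neg_sub]
    abel
  have hD : HasDerivAt P
      ((1 : Matrix (Fin n) (Fin n) ℂ) * (E x * B) * (h₁ * β₂) + 1 * (F x * (-B)) * (h₂ * β₂) +
        (-(A₂ * Q)) * (E x * B) * (h₁ * β₁) + (A₂ * Q) * (F x * (-B)) * (h₂ * β₁)) x := by
    rw [hPfun]
    exact (((sandwich_hasDerivAt _ _ hE).add (sandwich_hasDerivAt _ _ hF)).add
      (sandwich_hasDerivAt _ _ hE)).add (sandwich_hasDerivAt _ _ hF)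
  convert hD using 1
  -- identities for β
  have hJH : (Jmat p p)ᴴ = Jmat p p := by
    simp [Jmat, Matrix.fromBlocks_conjTranspose]
  have h21 : β₂ * Jmat p p * β₁ᴴ = 1 := by
    have h := congrArg Matrix.conjTranspose h12
    rw [Matrix.mul_assoc]
    simpa [Matrix.conjTranspose_mul, hJH] using h
  -- unfold P x
  have hPx : P x = E x * h₁ * β₂ + F x * h₂ * β₂ +
      (-(A₂ * Q * (E x * h₁)) * β₁ + A₂ * Q * (F x * h₂) * β₁) := by
    rw [hPfun]
    simp only [Matrix.one_mul, Matrix.neg_mul, Matrix.mul_assoc]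
    abel
  -- multiply P x by j H₁ and j H₂
  have hmulβ : ∀ (γ δ : Matrix (Fin p) (Fin p ⊕ Fin p) ℂ),
      γ * (Jmat p p * (δᴴ * δ)) = γ * Jmat p p * δᴴ * δ := by
    intro γ δ
    simp only [Matrix.mul_assoc]
  have hPj1 : P x * (Jmat p p * (β₁ᴴ * β₁)) = (E x * h₁ + F x * h₂) * β₁ := by
    rw [hPx]
    simp only [Matrix.add_mul, Matrix.neg_mul]
    rw [Matrix.mul_assoc (E x * h₁), Matrix.mul_assoc (F x * h₂), Matrix.mul_assoc (A₂ * Q * (E x * h₁)),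
      Matrix.mul_assoc (A₂ * Q * (F x * h₂)), hmulβ β₂ β₁, hmulβ β₁ β₁, h21, h11]
    simp [Matrix.add_mul]
  have hPj2 : P x * (Jmat p p * (β₂ᴴ * β₂)) = -(A₂ * Q * (E x * h₁ - F x * h₂)) * β₂ := by
    rw [hPx]
    simp only [Matrix.add_mul, Matrix.neg_mul]
    rw [Matrix.mul_assoc (E x * h₁), Matrix.mul_assoc (F x * h₂), Matrix.mul_assoc (A₂ * Q * (E x * h₁)),
      Matrix.mul_assoc (A₂ * Q * (F x * h₂)), hmulβ β₂ β₂, hmulβ β₁ β₂, h22, h12]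
    simp only [Matrix.zero_mul, Matrix.mul_zero, Matrix.one_mul, Matrix.mul_one,
      Matrix.mul_sub, Matrix.sub_mul, Matrix.neg_mul, Matrix.mul_assoc, neg_sub]
    abel
  -- inverse identities
  have hu1 : IsUnit A₁.det := (Matrix.isUnit_iff_isUnit_det A₁).mp hA1
  have hu2 : IsUnit A₂.det := (Matrix.isUnit_iff_isUnit_det A₂).mp hA2
  have hcomm : Commute A₁ A₂ := by
    have h1 : Commute A ((c₁ : ℂ) • (1 : Matrix (Fin n) (Fin n) ℂ)) :=
      ((Commute.one_right A).smul_right _)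
    have h2 : Commute A ((c₂ : ℂ) • (1 : Matrix (Fin n) (Fin n) ℂ)) :=
      ((Commute.one_right A).smul_right _)
    have h3 : Commute ((c₁ : ℂ) • (1 : Matrix (Fin n) (Fin n) ℂ))
        ((c₂ : ℂ) • (1 : Matrix (Fin n) (Fin n) ℂ)) :=
      (((Commute.one_right (1 : Matrix (Fin n) (Fin n) ℂ)).smul_right _).smul_left _)
    exact ((Commute.refl A).sub_right h2).sub_left (h1.symm.sub_right h3)
  have hA2inv : Commute A₂ A₁⁻¹ := by
    have : A₂ * A₁⁻¹ = A₁⁻¹ * A₂ := by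
      calc A₂ * A₁⁻¹ = A₁⁻¹ * A₁ * A₂ * A₁⁻¹ := by rw [Matrix.nonsing_inv_mul _ hu1, Matrix.one_mul]
        _ = A₁⁻¹ * A₂ * (A₁ * A₁⁻¹) := by
              rw [mul_assoc A₁⁻¹, hcomm.eq]; simp only [mul_assoc]
        _ = A₁⁻¹ * A₂ := by rw [Matrix.mul_nonsing_inv _ hu1, mul_one]
    exact this
  have hinv1 : A₁⁻¹ = A₂ * Q ^ 2 := by
    rw [hQ, ← mul_assoc, hA2inv.eq, mul_assoc, Matrix.mul_nonsing_inv _ hu2, mul_one]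
  -- now compute the target
  rw [Matrix.mul_assoc A₁⁻¹, Matrix.mul_assoc A₂⁻¹, hPj1, hPj2, ← Matrix.mul_assoc A₁⁻¹, hinv1]
  have hA2Φ : A₂⁻¹ * (-(A₂ * Q * (E x * h₁ - F x * h₂)) * β₂)
      = -(Q * (E x * h₁ - F x * h₂)) * β₂ := by
    rw [Matrix.neg_mul, Matrix.mul_neg, Matrix.neg_mul, Matrix.mul_assoc A₂ Q, ← Matrix.mul_assoc A₂⁻¹,
      ← Matrix.mul_assoc A₂⁻¹, Matrix.nonsing_inv_mul _ hu2, Matrix.one_mul, Matrix.mul_assoc Q]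
  rw [hA2Φ]
  -- pure algebra with commutation
  have e1 : E x * B = Complex.I • (Q * E x) := by
    rw [hBdef, Matrix.mul_smul, hQE]
  have e2 : F x * (-B) = -(Complex.I • (Q * F x)) := by
    rw [hBdef, Matrix.mul_neg, Matrix.mul_smul, hQF]
  rw [e1, e2]
  rw [pow_two]
  simp only [Matrix.mul_smul, Matrix.smul_mul, Matrix.mul_neg, Matrix.neg_mul, Matrix.mul_sub,
    Matrix.sub_mul, Matrix.mul_add, Matrix.add_mul, Matrix.one_mul, smul_neg, neg_neg, smul_add,
    smul_sub, neg_add, neg_sub, Matrix.mul_assoc]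
  abel
end

section
/- Let A ∈ ℂ^{n×n}, let c₁ ≠ c₂ be real with A − c₁Iₙ and A − c₂Iₙ invertible, let Q ∈ ℂ^{n×n} with Q² = (A − c₁Iₙ)⁻¹·(A − c₂Iₙ)⁻¹, and let h₁, h₂ ∈ ℂ^{n×p}. Define Φ₁(x) := e^{ixQ}h₁ + e^{−ixQ}h₂ and Φ₂(x) := −(A − c₂Iₙ)·Q·(e^{ixQ}h₁ − e^{−ixQ}h₂). Then for all x ∈ ℝ: Φ₁′(x) = −i·(A − c₂Iₙ)⁻¹·Φ₂(x) and Φ₂′(x) = −i·(A − c₁Iₙ)⁻¹·Φ₁(x). -/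
open Matrix

section EntryAux

open NormedSpace

attribute [local instance] Matrix.linftyOpNormedRing Matrix.linftyOpNormedAlgebra Matrix.linftyOpNormedSpace

/-- Entrywise derivative of `x ↦ exp((i x) • Q)`. -/
lemma exp_smul_entry_hasDerivAt {n : ℕ} (Q : Matrix (Fin n) (Fin n) ℂ) (x : ℝ)
    (i j : Fin n) :
    HasDerivAt (fun t : ℝ => exp ((Complex.I * (t : ℂ)) • Q) i j)
      (((Complex.I • Q) * exp ((Complex.I * (x : ℂ)) • Q)) i j) x := by
  have h1 : HasDerivAt (fun u : ℂ => exp (u • (Complex.I • Q)))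
      ((Complex.I • Q) * exp (((x : ℂ)) • (Complex.I • Q))) (x : ℂ) :=
    hasDerivAt_exp_smul_const' (Complex.I • Q) (x : ℂ)
  have h2 : HasDerivAt (fun t : ℝ => exp (((t : ℂ)) • (Complex.I • Q)))
      ((Complex.I • Q) * exp (((x : ℂ)) • (Complex.I • Q))) x := by
    exact (h1.scomp x Complex.ofRealCLM.hasDerivAt).congr_deriv (by simp)
  have hsm : ∀ t : ℝ, ((t : ℂ)) • (Complex.I • Q) = (Complex.I * (t : ℂ)) • Q := by
    intro t; rw [smul_smul, mul_comm]
  rw [hsm] at h2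
  simp_rw [hsm] at h2
  -- entry evaluation as a continuous linear map
  let L : Matrix (Fin n) (Fin n) ℂ →ₗ[ℂ] ℂ :=
    { toFun := fun M => M i j
      map_add' := fun _ _ => rfl
      map_smul' := fun _ _ => rfl }
  have := ((L.toContinuousLinearMap.restrictScalars ℝ).hasFDerivAt).comp_hasDerivAt x h2
  exact this

end EntryAux

attribute [local instance] Matrix.normedAddCommGroup Matrix.normedSpace

/-- Derivative of `x ↦ C · exp((i x) • Q) · h`. -/
lemma hasDerivAt_const_mul_exp_mul {n p : ℕ} (C Q : Matrix (Fin n) (Fin n) ℂ)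
    (h : Matrix (Fin n) (Fin p) ℂ) (x : ℝ) :
    HasDerivAt (fun t : ℝ => C * NormedSpace.exp ((Complex.I * (t : ℂ)) • Q) * h)
      (C * ((Complex.I • Q) * NormedSpace.exp ((Complex.I * (x : ℂ)) • Q)) * h) x := by
  apply hasDerivAt_pi.2
  intro i
  apply hasDerivAt_pi.2
  intro j
  have key : HasDerivAt
      (fun t : ℝ => ∑ k, (∑ l, C i l * NormedSpace.exp ((Complex.I * (t : ℂ)) • Q) l k) * h k j)
      (∑ k, (∑ l, C i l *
        ((Complex.I • Q) * NormedSpace.exp ((Complex.I * (x : ℂ)) • Q)) l k) * h k j) x :=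
    HasDerivAt.fun_sum fun k _ =>
      (HasDerivAt.fun_sum fun l _ =>
        (exp_smul_entry_hasDerivAt Q x l k).const_mul (C i l)).mul_const (h k j)
  simpa [Matrix.mul_apply, Finset.mul_sum, mul_assoc, mul_left_comm] using key

/-- system (c21), the key computation in the proof of Proposition 3.5.
With `Q² = (A − c₁Iₙ)⁻¹(A − c₂Iₙ)⁻¹`, `Φ₁(x) = e^{ixQ}h₁ + e^{−ixQ}h₂` and
`Φ₂(x) = −(A − c₂Iₙ) Q (e^{ixQ}h₁ − e^{−ixQ}h₂)`, one has
`Φ₁′(x) = −i (A − c₂Iₙ)⁻¹ Φ₂(x)` and `Φ₂′(x) = −i (A − c₁Iₙ)⁻¹ Φ₁(x)`. -/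
theorem explicit_eigenfunction_system {n p : ℕ}
    (A : Matrix (Fin n) (Fin n) ℂ) (c₁ c₂ : ℝ) (hc : c₁ ≠ c₂)
    (hA1 : IsUnit (A - (c₁ : ℂ) • (1 : Matrix (Fin n) (Fin n) ℂ)))
    (hA2 : IsUnit (A - (c₂ : ℂ) • (1 : Matrix (Fin n) (Fin n) ℂ)))
    (Q : Matrix (Fin n) (Fin n) ℂ)
    (hQ : Q ^ 2 = (A - (c₁ : ℂ) • 1)⁻¹ * (A - (c₂ : ℂ) • 1)⁻¹)
    (h₁ h₂ : Matrix (Fin n) (Fin p) ℂ) :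
    let Φ₁ : ℝ → Matrix (Fin n) (Fin p) ℂ := fun x =>
      NormedSpace.exp ((Complex.I * (x : ℂ)) • Q) * h₁ +
        NormedSpace.exp (-((Complex.I * (x : ℂ)) • Q)) * h₂
    let Φ₂ : ℝ → Matrix (Fin n) (Fin p) ℂ := fun x =>
      -((A - (c₂ : ℂ) • 1) * Q *
        (NormedSpace.exp ((Complex.I * (x : ℂ)) • Q) * h₁ -
          NormedSpace.exp (-((Complex.I * (x : ℂ)) • Q)) * h₂))
    ∀ x : ℝ,
      HasDerivAt Φ₁ (-(Complex.I • ((A - (c₂ : ℂ) • 1)⁻¹ * Φ₂ x))) x ∧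
      HasDerivAt Φ₂ (-(Complex.I • ((A - (c₁ : ℂ) • 1)⁻¹ * Φ₁ x))) x := by
  intro Φ₁ Φ₂ x
  have hdet1 : IsUnit (A - (c₁ : ℂ) • (1 : Matrix (Fin n) (Fin n) ℂ)).det :=
    (Matrix.isUnit_iff_isUnit_det _).1 hA1
  have hdet2 : IsUnit (A - (c₂ : ℂ) • (1 : Matrix (Fin n) (Fin n) ℂ)).det :=
    (Matrix.isUnit_iff_isUnit_det _).1 hA2
  have hinv2 : (A - (c₂ : ℂ) • 1)⁻¹ * (A - (c₂ : ℂ) • 1) = 1 :=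
    Matrix.nonsing_inv_mul _ hdet2
  have hinv2' : (A - (c₂ : ℂ) • 1) * (A - (c₂ : ℂ) • 1)⁻¹ = 1 :=
    Matrix.mul_nonsing_inv _ hdet2
  -- abbreviations
  set Ep : Matrix (Fin n) (Fin n) ℂ := NormedSpace.exp ((Complex.I * (x : ℂ)) • Q) with hEp
  set Em : Matrix (Fin n) (Fin n) ℂ := NormedSpace.exp (-((Complex.I * (x : ℂ)) • Q)) with hEm
  have hEneg : NormedSpace.exp ((Complex.I * (x : ℂ)) • (-Q)) = Em := by rw [smul_neg]
  -- commutation of (A - c₂) with (A - c₁)⁻¹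
  have hcommAB : (A - (c₂ : ℂ) • 1) * (A - (c₁ : ℂ) • 1) =
      (A - (c₁ : ℂ) • 1) * (A - (c₂ : ℂ) • 1) := by
    simp only [Matrix.sub_mul, Matrix.mul_sub, Matrix.smul_mul, Matrix.mul_smul, smul_smul,
      Matrix.one_mul, Matrix.mul_one]
    module
  have hinv1 : (A - (c₁ : ℂ) • 1)⁻¹ * (A - (c₁ : ℂ) • 1) = 1 :=
    Matrix.nonsing_inv_mul _ hdet1
  have hinv1' : (A - (c₁ : ℂ) • 1) * (A - (c₁ : ℂ) • 1)⁻¹ = 1 :=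
    Matrix.mul_nonsing_inv _ hdet1
  have hcommi : (A - (c₂ : ℂ) • 1) * (A - (c₁ : ℂ) • 1)⁻¹ =
      (A - (c₁ : ℂ) • 1)⁻¹ * (A - (c₂ : ℂ) • 1) := by
    calc (A - (c₂ : ℂ) • 1) * (A - (c₁ : ℂ) • 1)⁻¹
        = ((A - (c₁ : ℂ) • 1)⁻¹ * (A - (c₁ : ℂ) • 1)) *
            ((A - (c₂ : ℂ) • 1) * (A - (c₁ : ℂ) • 1)⁻¹) := by
          rw [hinv1, Matrix.one_mul]
      _ = (A - (c₁ : ℂ) • 1)⁻¹ * (((A - (c₁ : ℂ) • 1) * (A - (c₂ : ℂ) • 1)) *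
            (A - (c₁ : ℂ) • 1)⁻¹) := by
          simp only [Matrix.mul_assoc]
      _ = (A - (c₁ : ℂ) • 1)⁻¹ * (((A - (c₂ : ℂ) • 1) * (A - (c₁ : ℂ) • 1)) *
            (A - (c₁ : ℂ) • 1)⁻¹) := by
          rw [hcommAB]
      _ = (A - (c₁ : ℂ) • 1)⁻¹ * ((A - (c₂ : ℂ) • 1) *
            ((A - (c₁ : ℂ) • 1) * (A - (c₁ : ℂ) • 1)⁻¹)) := by
          simp only [Matrix.mul_assoc]
      _ = (A - (c₁ : ℂ) • 1)⁻¹ * (A - (c₂ : ℂ) • 1) := by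
          rw [hinv1', Matrix.mul_one]
  have hMQ : (A - (c₂ : ℂ) • 1) * Q * Q = (A - (c₁ : ℂ) • 1)⁻¹ := by
    have : Q * Q = Q ^ 2 := (sq Q).symm
    rw [Matrix.mul_assoc, this, hQ, ← Matrix.mul_assoc, hcommi, Matrix.mul_assoc,
      hinv2', Matrix.mul_one]
  -- derivative pieces
  have d1 := hasDerivAt_const_mul_exp_mul (1 : Matrix (Fin n) (Fin n) ℂ) Q h₁ x
  have d2 := hasDerivAt_const_mul_exp_mul (1 : Matrix (Fin n) (Fin n) ℂ) (-Q) h₂ x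
  have d3 := hasDerivAt_const_mul_exp_mul (-((A - (c₂ : ℂ) • 1) * Q)) Q h₁ x
  have d4 := hasDerivAt_const_mul_exp_mul ((A - (c₂ : ℂ) • 1) * Q) (-Q) h₂ x
  constructor
  · have hfun : Φ₁ = fun t : ℝ =>
        (1 : Matrix (Fin n) (Fin n) ℂ) * NormedSpace.exp ((Complex.I * (t : ℂ)) • Q) * h₁ +
          (1 : Matrix (Fin n) (Fin n) ℂ) *
            NormedSpace.exp ((Complex.I * (t : ℂ)) • (-Q)) * h₂ := by
      funext t
      show NormedSpace.exp ((Complex.I * (t : ℂ)) • Q) * h₁ +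
          NormedSpace.exp (-((Complex.I * (t : ℂ)) • Q)) * h₂ = _
      rw [smul_neg, Matrix.one_mul, Matrix.one_mul]
    rw [hfun]
    have hval : -(Complex.I • ((A - (c₂ : ℂ) • 1)⁻¹ * Φ₂ x)) =
        (1 : Matrix (Fin n) (Fin n) ℂ) * (Complex.I • Q * Ep) * h₁ +
          (1 : Matrix (Fin n) (Fin n) ℂ) * (Complex.I • (-Q) * Em) * h₂ := by
      show -(Complex.I • ((A - (c₂ : ℂ) • 1)⁻¹ *
          -((A - (c₂ : ℂ) • 1) * Q * (Ep * h₁ - Em * h₂)))) = _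
      have e1 : (A - (c₂ : ℂ) • 1)⁻¹ * -((A - (c₂ : ℂ) • 1) * Q * (Ep * h₁ - Em * h₂)) =
          -(Q * (Ep * h₁ - Em * h₂)) := by
        rw [Matrix.mul_neg]
        congr 1
        rw [Matrix.mul_assoc (A - (c₂ : ℂ) • 1) Q, ← Matrix.mul_assoc, hinv2, Matrix.one_mul]
      rw [e1, smul_neg, neg_neg]
      simp only [Matrix.one_mul, Matrix.smul_mul, smul_neg, neg_smul, Matrix.neg_mul,
        Matrix.mul_sub, Matrix.mul_assoc, smul_sub]
      abel
    rw [hval]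
    exact (d1.add (by rwa [hEneg] at d2))
  · have hfun : Φ₂ = fun t : ℝ =>
        -((A - (c₂ : ℂ) • 1) * Q) * NormedSpace.exp ((Complex.I * (t : ℂ)) • Q) * h₁ +
          ((A - (c₂ : ℂ) • 1) * Q) *
            NormedSpace.exp ((Complex.I * (t : ℂ)) • (-Q)) * h₂ := by
      funext t
      show -((A - (c₂ : ℂ) • 1) * Q *
          (NormedSpace.exp ((Complex.I * (t : ℂ)) • Q) * h₁ -
            NormedSpace.exp (-((Complex.I * (t : ℂ)) • Q)) * h₂)) = _
      rw [smul_neg]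
      simp only [Matrix.mul_sub, Matrix.mul_add, Matrix.mul_neg, Matrix.neg_mul,
        Matrix.mul_assoc, sub_eq_add_neg, neg_add]
      abel
    rw [hfun]
    have hval : -(Complex.I • ((A - (c₁ : ℂ) • 1)⁻¹ * Φ₁ x)) =
        -((A - (c₂ : ℂ) • 1) * Q) * (Complex.I • Q * Ep) * h₁ +
          ((A - (c₂ : ℂ) • 1) * Q) * (Complex.I • (-Q) * Em) * h₂ := by
      show -(Complex.I • ((A - (c₁ : ℂ) • 1)⁻¹ * (Ep * h₁ + Em * h₂))) = _
      rw [← hMQ]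
      simp only [Matrix.mul_add, Matrix.smul_mul, Matrix.mul_smul, Matrix.mul_assoc, smul_add,
        neg_add, Matrix.neg_mul, Matrix.mul_neg, smul_neg, neg_smul, neg_neg]
    rw [hval]
    exact (d3.add (by rwa [hEneg] at d4))
end

section
/- Assume the generalised Hamiltonian GBDT setup, together with A·S(0) − S(0)·A* = i·Π(0)·j·Π(0)*, S(0) = S(0)*, and S(x) invertible for all x in an interval 𝓘 containing 0; define w_A, β̃ₖ, H̃ₖ as in Theorem 3.1. Then for all x ∈ 𝓘 the function x ↦ Π(x)*·S(x)⁻¹·Π(x) is differentiable and (Π(x)*·S(x)⁻¹·Π(x))′ = Σ_{k=1}^r (H̃ₖ(x) − Hₖ(x)). -/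
open Matrix

attribute [local instance] Matrix.normedAddCommGroup Matrix.normedSpace

/-- The transfer matrix function
`w_A(x,z) = I_m − i j Π(x)* S(x)⁻¹ (A − zIₙ)⁻¹ Π(x)` (formula (c8)). -/
noncomputable def wA {m₁ m₂ n : ℕ} (A : Matrix (Fin n) (Fin n) ℂ)
    (P : ℝ → Matrix (Fin n) (Fin m₁ ⊕ Fin m₂) ℂ) (S : ℝ → Matrix (Fin n) (Fin n) ℂ)
    (x : ℝ) (z : ℂ) : Matrix (Fin m₁ ⊕ Fin m₂) (Fin m₁ ⊕ Fin m₂) ℂ :=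
  1 - Complex.I • (Jmat m₁ m₂ * (P x)ᴴ * (S x)⁻¹ * (A - z • 1)⁻¹ * P x)

/-- The transformed `β̃ₖ(x) = βₖ(x) j w_A(x,cₖ)* j` (formula (c13)). -/
noncomputable def betaTil {m₁ m₂ n p r : ℕ} (c : Fin r → ℝ)
    (A : Matrix (Fin n) (Fin n) ℂ)
    (β : Fin r → ℝ → Matrix (Fin p) (Fin m₁ ⊕ Fin m₂) ℂ)
    (P : ℝ → Matrix (Fin n) (Fin m₁ ⊕ Fin m₂) ℂ) (S : ℝ → Matrix (Fin n) (Fin n) ℂ)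
    (k : Fin r) (x : ℝ) : Matrix (Fin p) (Fin m₁ ⊕ Fin m₂) ℂ :=
  β k x * Jmat m₁ m₂ * (wA A P S x ((c k : ℂ)))ᴴ * Jmat m₁ m₂

/-- The transformed Hamiltonian `H̃ₖ(x) = β̃ₖ(x)* β̃ₖ(x)` (formula (c13)). -/
noncomputable def Htil {m₁ m₂ n p r : ℕ} (c : Fin r → ℝ)
    (A : Matrix (Fin n) (Fin n) ℂ)
    (β : Fin r → ℝ → Matrix (Fin p) (Fin m₁ ⊕ Fin m₂) ℂ)
    (P : ℝ → Matrix (Fin n) (Fin m₁ ⊕ Fin m₂) ℂ) (S : ℝ → Matrix (Fin n) (Fin n) ℂ)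
    (k : Fin r) (x : ℝ) : Matrix (Fin m₁ ⊕ Fin m₂) (Fin m₁ ⊕ Fin m₂) ℂ :=
  (betaTil c A β P S k x)ᴴ * betaTil c A β P S k x

/-! ### Auxiliary calculus lemmas for matrix-valued functions -/

section Calc

variable {l m n : Type*} [Fintype l] [Fintype m] [Fintype n]

theorem hasDerivAt_matrix {f : ℝ → Matrix l m ℂ} {f' : Matrix l m ℂ} {x : ℝ} :
    HasDerivAt f f' x ↔ ∀ i j, HasDerivAt (fun t => f t i j) (f' i j) x := by
  exact hasDerivAt_pi.trans (forall_congr' fun i => hasDerivAt_pi)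

theorem HasDerivAt.matrix_mul {f : ℝ → Matrix l m ℂ} {g : ℝ → Matrix m n ℂ}
    {f' : Matrix l m ℂ} {g' : Matrix m n ℂ} {x : ℝ}
    (hf : HasDerivAt f f' x) (hg : HasDerivAt g g' x) :
    HasDerivAt (fun t => f t * g t) (f' * g x + f x * g') x := by
  rw [hasDerivAt_matrix] at hf hg ⊢
  intro i j
  have h := HasDerivAt.fun_sum (u := Finset.univ) (fun k _ => ((hf i k).mul (hg k j)))
  simpa [Matrix.mul_apply, Matrix.add_apply, Finset.sum_add_distrib] using h

theorem HasDerivAt.matrix_conjTranspose {f : ℝ → Matrix l m ℂ} {f' : Matrix l m ℂ} {x : ℝ}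
    (hf : HasDerivAt f f' x) : HasDerivAt (fun t => (f t)ᴴ) f'ᴴ x := by
  rw [hasDerivAt_matrix] at hf ⊢
  intro i j
  simpa [Matrix.conjTranspose_apply] using (hf j i).star

theorem differentiableAt_matrix {f : ℝ → Matrix l m ℂ} {x : ℝ} :
    DifferentiableAt ℝ f x ↔ ∀ i j, DifferentiableAt ℝ (fun t => f t i j) x := by
  exact differentiableAt_pi.trans (forall_congr' fun i => differentiableAt_pi)

variable [DecidableEq m]

theorem DifferentiableAt.matrix_det {f : ℝ → Matrix m m ℂ} {x : ℝ}
    (hf : ∀ i j, DifferentiableAt ℝ (fun t => f t i j) x) :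
    DifferentiableAt ℝ (fun t => (f t).det) x := by
  simp only [Matrix.det_apply']
  apply DifferentiableAt.fun_sum
  intro σ _
  apply DifferentiableAt.const_mul
  exact DifferentiableAt.fun_finsetProd fun i _ => hf (σ i) i

theorem DifferentiableAt.matrix_inv {f : ℝ → Matrix m m ℂ} {x : ℝ}
    (hf : ∀ i j, DifferentiableAt ℝ (fun t => f t i j) x)
    (hx : IsUnit (f x)) :
    DifferentiableAt ℝ (fun t => (f t)⁻¹) x := by
  have hdet : DifferentiableAt ℝ (fun t => (f t).det) x := DifferentiableAt.matrix_det hf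
  have hdetne : (f x).det ≠ 0 := ((Matrix.isUnit_iff_isUnit_det _).1 hx).ne_zero
  have hadj : ∀ i j, DifferentiableAt ℝ (fun t => (f t).adjugate i j) x := by
    intro i j
    simp only [Matrix.adjugate_apply]
    apply DifferentiableAt.matrix_det
    intro i' j'
    by_cases h : i' = j
    · simp only [h, Matrix.updateRow_self]; exact differentiableAt_const _
    · simp only [Matrix.updateRow_ne h]; exact hf i' j'
  rw [differentiableAt_matrix]
  intro i j
  have heq : (fun t => (f t)⁻¹ i j) = fun t => ((f t).det)⁻¹ * (f t).adjugate i j := by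
    funext t
    rw [Matrix.inv_def, Ring.inverse_eq_inv', Matrix.smul_apply, smul_eq_mul]
  rw [heq]
  exact (hdet.inv hdetne).mul (hadj i j)

theorem hasDerivAt_matrix_inv {S : ℝ → Matrix m m ℂ} {S' : Matrix m m ℂ} {x : ℝ}
    (hS : HasDerivAt S S' x) (hx : IsUnit (S x)) :
    HasDerivAt (fun t => (S t)⁻¹) (-((S x)⁻¹ * S' * (S x)⁻¹)) x := by
  have hent : ∀ i j, DifferentiableAt ℝ (fun t => S t i j) x :=
    fun i j => (hasDerivAt_matrix.1 hS i j).differentiableAt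
  have hdiff : DifferentiableAt ℝ (fun t => (S t)⁻¹) x :=
    DifferentiableAt.matrix_inv hent hx
  obtain ⟨F', hF⟩ : ∃ F', HasDerivAt (fun t => (S t)⁻¹) F' x := ⟨_, hdiff.hasDerivAt⟩
  have hdetcont : ContinuousAt (fun t => (S t).det) x :=
    (DifferentiableAt.matrix_det hent).continuousAt
  have hdetne : (S x).det ≠ 0 := ((Matrix.isUnit_iff_isUnit_det _).1 hx).ne_zero
  have hev : ∀ᶠ t in nhds x, (S t).det ≠ 0 := hdetcont.eventually_ne hdetne
  have hev1 : (fun t => (S t)⁻¹ * S t) =ᶠ[nhds x] (fun _ => (1 : Matrix m m ℂ)) := by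
    filter_upwards [hev] with t ht
    exact Matrix.nonsing_inv_mul _ (isUnit_iff_ne_zero.2 ht)
  have hprod : HasDerivAt (fun t => (S t)⁻¹ * S t) (F' * S x + (S x)⁻¹ * S') x :=
    hF.matrix_mul hS
  have h1 : HasDerivAt (fun _ : ℝ => (1 : Matrix m m ℂ)) 0 x := hasDerivAt_const _ _
  have hzero : F' * S x + (S x)⁻¹ * S' = 0 :=
    ((h1.congr_of_eventuallyEq hev1).unique hprod).symm
  have h2 : F' * S x = -((S x)⁻¹ * S') := eq_neg_of_add_eq_zero_left hzero
  have hF'eq : F' = -((S x)⁻¹ * S' * (S x)⁻¹) := by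
    calc F' = F' * S x * (S x)⁻¹ := by
            rw [mul_assoc, Matrix.mul_nonsing_inv _ ((Matrix.isUnit_iff_isUnit_det _).1 hx),
              mul_one]
      _ = -((S x)⁻¹ * S' * (S x)⁻¹) := by rw [h2, neg_mul]
  rwa [hF'eq] at hF

end Calc

/-! ### Algebraic key lemma -/

set_option maxHeartbeats 1000000 in
theorem gbdt_key_s16 {p' m' n' : Type*} [Fintype p'] [Fintype m'] [Fintype n'] [DecidableEq m']
    {β : Matrix p' m' ℂ} {J H : Matrix m' m' ℂ}
    {Q : Matrix n' m' ℂ} {T R R' : Matrix n' n' ℂ}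
    (hH : H = βᴴ * β)
    (hT : Tᴴ = T) (hR : Rᴴ = R') (hJ : Jᴴ = J) (hJJ : J * J = 1) :
    (β * J * (1 - Complex.I • (J * Qᴴ * T * R * Q))ᴴ * J)ᴴ *
      (β * J * (1 - Complex.I • (J * Qᴴ * T * R * Q))ᴴ * J) - βᴴ * β
    = Complex.I • (H * J * Qᴴ * R' * T * Q)
      + Qᴴ * T * (R * Q * (J * H) * J * Qᴴ * R') * T * Q
      - Complex.I • (Qᴴ * T * (R * Q * (J * H))) := by
  have hR' : R'ᴴ = R := by rw [← hR, conjTranspose_conjTranspose]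
  have hJJ' : ∀ (O : Matrix m' m' ℂ), J * (J * O) = O := fun O => by
    rw [← Matrix.mul_assoc, hJJ, Matrix.one_mul]
  subst hH
  set w : Matrix m' m' ℂ := 1 - Complex.I • (J * Qᴴ * T * R * Q) with hwdef
  have hwh : wᴴ = 1 + Complex.I • (Qᴴ * (R' * (T * (Q * J)))) := by
    rw [hwdef]
    simp only [conjTranspose_sub, conjTranspose_one, conjTranspose_smul, conjTranspose_mul,
      conjTranspose_conjTranspose, hT, hR, hJ, Complex.star_def, Complex.conj_I, neg_smul,
      sub_neg_eq_add, Matrix.mul_assoc]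
  have h1 : (β * J * wᴴ * J)ᴴ = J * (w * (J * βᴴ)) := by
    simp only [conjTranspose_mul, conjTranspose_conjTranspose, hJ, Matrix.mul_assoc]
  rw [h1, hwh, hwdef]
  simp only [Matrix.mul_add, Matrix.add_mul, Matrix.mul_sub, Matrix.sub_mul, Matrix.mul_one,
    Matrix.one_mul, Matrix.mul_neg, Matrix.neg_mul, Matrix.smul_mul, Matrix.mul_smul,
    smul_smul, Complex.I_mul_I, neg_smul, one_smul, neg_neg, Matrix.mul_assoc, hJJ', hJJ,
    sub_eq_add_neg, smul_neg, smul_add, smul_sub]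
  abel

set_option maxHeartbeats 2000000 in
/-- Proposition 4.4, a conservation law. Under the hypotheses of
Theorem 3.1, the function `x ↦ Π(x)* S(x)⁻¹ Π(x)` is differentiable on `𝓘` with
`(Π(x)* S(x)⁻¹ Π(x))′ = Σₖ (H̃ₖ(x) − Hₖ(x))`. -/
theorem gbdt_conservation_law {m₁ m₂ n p r : ℕ} (hm : 0 < m₁ + m₂) (hr : 1 ≤ r)
    (c : Fin r → ℝ) (hc : Function.Injective c)
    (A : Matrix (Fin n) (Fin n) ℂ)
    (hA : ∀ k, IsUnit (A - (c k : ℂ) • (1 : Matrix (Fin n) (Fin n) ℂ)))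
    (β : Fin r → ℝ → Matrix (Fin p) (Fin m₁ ⊕ Fin m₂) ℂ)
    (hβ : ∀ k, Continuous (β k))
    (P : ℝ → Matrix (Fin n) (Fin m₁ ⊕ Fin m₂) ℂ)
    (S : ℝ → Matrix (Fin n) (Fin n) ℂ)
    (hP : ∀ x : ℝ, HasDerivAt P
      (-(Complex.I • ∑ k : Fin r,
        (A - (c k : ℂ) • 1)⁻¹ * P x * (Jmat m₁ m₂ * ((β k x)ᴴ * β k x)))) x)
    (hS : ∀ x : ℝ, HasDerivAt S
      (-(∑ k : Fin r,
        (A - (c k : ℂ) • 1)⁻¹ * P x * (Jmat m₁ m₂ * ((β k x)ᴴ * β k x)) * Jmat m₁ m₂ *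
          (P x)ᴴ * (Aᴴ - (c k : ℂ) • 1)⁻¹)) x)
    (hS0 : A * S 0 - S 0 * Aᴴ = Complex.I • (P 0 * Jmat m₁ m₂ * (P 0)ᴴ))
    (hS0h : (S 0)ᴴ = S 0)
    (𝓘 : Set ℝ) (h0 : (0 : ℝ) ∈ 𝓘) (hSinv : ∀ x ∈ 𝓘, IsUnit (S x)) :
    ∀ x ∈ 𝓘, HasDerivAt (fun t => (P t)ᴴ * (S t)⁻¹ * P t)
      (∑ k : Fin r, (Htil c A β P S k x - (β k x)ᴴ * β k x)) x := by
  have hJ : (Jmat m₁ m₂)ᴴ = Jmat m₁ m₂ := by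
    simp [Jmat, Matrix.fromBlocks_conjTranspose]
  have hJJ : Jmat m₁ m₂ * Jmat m₁ m₂ = 1 := by
    simp [Jmat, Matrix.fromBlocks_multiply, ← Matrix.fromBlocks_one]
  have hRH : ∀ k, ((A - (c k : ℂ) • 1)⁻¹ : Matrix (Fin n) (Fin n) ℂ)ᴴ
      = (Aᴴ - (c k : ℂ) • 1)⁻¹ := by
    intro k
    rw [Matrix.conjTranspose_nonsing_inv]
    congr 1
    simp [Matrix.conjTranspose_sub, Matrix.conjTranspose_smul, Complex.star_def,
      Complex.conj_ofReal]
  have hRH' : ∀ k, ((Aᴴ - (c k : ℂ) • 1)⁻¹ : Matrix (Fin n) (Fin n) ℂ)ᴴ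
      = (A - (c k : ℂ) • 1)⁻¹ := by
    intro k
    rw [← hRH k, conjTranspose_conjTranspose]
  -- the given derivative of S is Hermitian
  have hSdH : ∀ t : ℝ,
      (-(∑ k : Fin r,
        (A - (c k : ℂ) • 1)⁻¹ * P t * (Jmat m₁ m₂ * ((β k t)ᴴ * β k t)) * Jmat m₁ m₂ *
          (P t)ᴴ * (Aᴴ - (c k : ℂ) • 1)⁻¹))ᴴ
      = -(∑ k : Fin r,
        (A - (c k : ℂ) • 1)⁻¹ * P t * (Jmat m₁ m₂ * ((β k t)ᴴ * β k t)) * Jmat m₁ m₂ *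
          (P t)ᴴ * (Aᴴ - (c k : ℂ) • 1)⁻¹) := by
    intro t
    simp only [conjTranspose_neg, Matrix.conjTranspose_sum, conjTranspose_mul,
      conjTranspose_conjTranspose, hRH, hRH', hJ, Matrix.mul_assoc]
  -- S is Hermitian everywhere
  have Sherm : ∀ t : ℝ, (S t)ᴴ = S t := by
    have hd : ∀ t : ℝ, HasDerivAt (fun u => (S u)ᴴ - S u) 0 t := by
      intro t
      have h := ((hS t).matrix_conjTranspose).sub (hS t)
      rwa [hSdH t, sub_self] at h
    intro t
    have hcst := is_const_of_deriv_eq_zero (𝕜 := ℝ)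
      (f := fun u => (S u)ᴴ - S u)
      (fun u => (hd u).differentiableAt) (fun u => (hd u).deriv) t 0
    simp only [hS0h, sub_self] at hcst
    exact sub_eq_zero.1 hcst
  intro x hx
  have hT : ((S x)⁻¹)ᴴ = (S x)⁻¹ := by
    rw [Matrix.conjTranspose_nonsing_inv, Sherm x]
  have hTd := hasDerivAt_matrix_inv (hS x) (hSinv x hx)
  have hG := (((hP x).matrix_conjTranspose).matrix_mul hTd).matrix_mul (hP x)
  convert hG using 1
  have hkey : ∀ k : Fin r, Htil c A β P S k x - (β k x)ᴴ * β k x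
      = Complex.I • ((β k x)ᴴ * β k x * Jmat m₁ m₂ * (P x)ᴴ * (Aᴴ - (c k : ℂ) • 1)⁻¹ *
          (S x)⁻¹ * P x)
        + (P x)ᴴ * (S x)⁻¹ * ((A - (c k : ℂ) • 1)⁻¹ * P x *
            (Jmat m₁ m₂ * ((β k x)ᴴ * β k x)) * Jmat m₁ m₂ * (P x)ᴴ *
            (Aᴴ - (c k : ℂ) • 1)⁻¹) * (S x)⁻¹ * P x
        - Complex.I • ((P x)ᴴ * (S x)⁻¹ * ((A - (c k : ℂ) • 1)⁻¹ * P x *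
            (Jmat m₁ m₂ * ((β k x)ᴴ * β k x)))) := by
    intro k
    have := gbdt_key_s16 (β := β k x) (J := Jmat m₁ m₂) (H := (β k x)ᴴ * β k x)
      (Q := P x) (T := (S x)⁻¹) (R := (A - (c k : ℂ) • 1)⁻¹)
      (R' := (Aᴴ - (c k : ℂ) • 1)⁻¹) rfl hT (hRH k) hJ hJJ
    simpa only [Htil, betaTil, wA] using this
  have hRH2 : ∀ k : Fin r, ((A + -((c k : ℂ) • 1))⁻¹ : Matrix (Fin n) (Fin n) ℂ)ᴴ
      = (Aᴴ + -((c k : ℂ) • 1))⁻¹ := by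
    intro k
    simpa [sub_eq_add_neg] using hRH k
  simp only [hkey]
  -- now pure sum/linear algebra
  simp only [conjTranspose_neg, conjTranspose_smul, Matrix.conjTranspose_sum,
    conjTranspose_mul, conjTranspose_conjTranspose, hRH, hRH', hRH2, hJ, hT,
    Complex.star_def, Complex.conj_I, neg_smul, neg_neg,
    Matrix.neg_mul, Matrix.mul_neg, Matrix.smul_mul, Matrix.mul_smul,
    Matrix.add_mul, Matrix.mul_add,
    Matrix.sum_mul, Matrix.mul_sum, Finset.smul_sum,
    Matrix.mul_assoc, sub_eq_add_neg, Finset.sum_add_distrib, Finset.sum_neg_distrib,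
    smul_add, smul_neg, smul_smul, Complex.I_mul_I, one_smul]
end

section
/- Let m₁, m₂ ∈ ℕ with m = m₁ + m₂ > 0, let j = diag(I_{m₁}, −I_{m₂}) ∈ ℂ^{m×m}, let C ∈ ℂ^{m×m} be positive definite (Hermitian with positive eigenvalues) and satisfy C·j·C = j, and let ℓ ∈ ℕ with ℓ ≥ 1. Then there exists a unique positive definite matrix D ∈ ℂ^{m×m} with D^ℓ = C, and this D satisfies D·j·D = j. -/
open Matrix
open scoped ComplexOrder

section Helpers

variable {n : Type*} [Fintype n] [DecidableEq n]

lemma contOn_finite {s : Set ℝ} (hs : s.Finite) (f : ℝ → ℝ) : ContinuousOn f s := by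
  have := hs.to_subtype
  rw [continuousOn_iff_continuous_restrict]
  exact continuous_of_discreteTopology

lemma spectrum_pos {A : Matrix n n ℂ} (hA : A.PosDef) : ∀ x ∈ spectrum ℝ A, 0 < x := by
  intro x hx
  rw [hA.1.spectrum_real_eq_range_eigenvalues] at hx
  obtain ⟨i, rfl⟩ := hx
  exact hA.eigenvalues_pos i

lemma posDef_conj {A : Matrix n n ℂ} (hA : A.PosDef) {B : Matrix n n ℂ} (hB : IsUnit B) :
    (B * A * Bᴴ).PosDef := by
  refine Matrix.PosDef.of_dotProduct_mulVec_pos (isHermitian_mul_mul_conjTranspose B hA.1) (fun x hx => ?_)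
  have hBH : IsUnit Bᴴ := by
    rw [← star_eq_conjTranspose]; exact hB.star
  have hx' : Bᴴ *ᵥ x ≠ 0 := by
    intro h
    exact hx <| (Matrix.mulVec_injective_iff_isUnit.mpr hBH) (by simpa using h)
  simpa only [star_mulVec, dotProduct_mulVec, vecMul_vecMul, conjTranspose_conjTranspose]
    using (posDef_iff_dotProduct_mulVec.mp hA).2 hx'

lemma posDef_cfc {A : Matrix n n ℂ} (hA : A.PosDef) {f : ℝ → ℝ}
    (hf : ∀ x ∈ spectrum ℝ A, 0 < f x) : (cfc f A).PosDef := by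
  rw [Matrix.IsHermitian.cfc_eq hA.1, Matrix.IsHermitian.cfc]
  rw [Unitary.conjStarAlgAut_apply, star_eq_conjTranspose]
  refine posDef_conj ?_ ?_
  · refine Matrix.PosDef.diagonal fun i => ?_
    have := hf _ (hA.1.eigenvalues_mem_spectrum_real i)
    simpa using (RCLike.ofReal_pos (K := ℂ)).mpr this
  · exact (Unitary.toUnits (hA.1.eigenvectorUnitary)).isUnit

lemma cfc_root_pow {A : Matrix n n ℂ} (hA : A.PosDef) {ℓ : ℕ} (hℓ : ℓ ≠ 0) :
    cfc (fun x : ℝ => x ^ ((ℓ : ℝ)⁻¹)) (A ^ ℓ) = A := by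
  have hsa : IsSelfAdjoint A := hA.1
  have h1 : A ^ ℓ = cfc (fun x : ℝ => x ^ ℓ) A := (cfc_pow_id A ℓ hsa).symm
  rw [h1, ← cfc_comp _ _ A hsa
    (contOn_finite ((Matrix.finite_real_spectrum).image _) _)
    (contOn_finite Matrix.finite_real_spectrum _)]
  have heq : (spectrum ℝ A).EqOn
      ((fun x : ℝ => x ^ ((ℓ : ℝ)⁻¹)) ∘ (fun x : ℝ => x ^ ℓ)) id := by
    intro x hx
    have hx0 : (0:ℝ) ≤ x := (spectrum_pos hA x hx).le
    simp only [Function.comp_apply, id_eq]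
    rw [← Real.rpow_natCast x ℓ, ← Real.rpow_mul hx0,
      mul_inv_cancel₀ (by exact_mod_cast hℓ), Real.rpow_one]
  rw [cfc_congr heq, cfc_id ℝ A hsa]

lemma root_pow {A : Matrix n n ℂ} (hA : A.PosDef) {ℓ : ℕ} (hℓ : ℓ ≠ 0) :
    (cfc (fun x : ℝ => x ^ ((ℓ : ℝ)⁻¹)) A) ^ ℓ = A := by
  have hsa : IsSelfAdjoint A := hA.1
  rw [← cfc_pow _ ℓ A (contOn_finite Matrix.finite_real_spectrum _) hsa]
  have heq : (spectrum ℝ A).EqOn (fun x : ℝ => (x ^ ((ℓ : ℝ)⁻¹)) ^ ℓ) id := by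
    intro x hx
    have hx0 : (0:ℝ) ≤ x := (spectrum_pos hA x hx).le
    simp only [id_eq]
    rw [← Real.rpow_natCast (x ^ ((ℓ : ℝ)⁻¹)) ℓ, ← Real.rpow_mul hx0,
      inv_mul_cancel₀ (by exact_mod_cast hℓ), Real.rpow_one]
  rw [cfc_congr heq, cfc_id ℝ A hsa]

lemma root_posDef {A : Matrix n n ℂ} (hA : A.PosDef) (ℓ : ℕ) :
    (cfc (fun x : ℝ => x ^ ((ℓ : ℝ)⁻¹)) A).PosDef :=
  posDef_cfc hA fun x hx => Real.rpow_pos_of_pos (spectrum_pos hA x hx) _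

/-- uniqueness of the positive definite ℓ-th root -/
lemma root_unique {A B : Matrix n n ℂ} (hA : A.PosDef) (hB : B.PosDef) {ℓ : ℕ}
    (hℓ : ℓ ≠ 0) (h : A ^ ℓ = B ^ ℓ) : A = B := by
  rw [← cfc_root_pow hA hℓ, h, cfc_root_pow hB hℓ]

end Helpers

/-- root assertion of Proposition B.3. If `C > 0` satisfies
`C j C = j` and `ℓ ≥ 1`, then there is a unique positive definite `D` with `D^ℓ = C`,
and this `D` satisfies `D j D = j`. -/
theorem positive_root_j_property {m₁ m₂ : ℕ} (hm : 0 < m₁ + m₂)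
    (C : Matrix (Fin m₁ ⊕ Fin m₂) (Fin m₁ ⊕ Fin m₂) ℂ)
    (hC : C.PosDef) (hCj : C * Jmat m₁ m₂ * C = Jmat m₁ m₂)
    (ℓ : ℕ) (hℓ : 1 ≤ ℓ) :
    ∃ D : Matrix (Fin m₁ ⊕ Fin m₂) (Fin m₁ ⊕ Fin m₂) ℂ,
      D.PosDef ∧ D ^ ℓ = C ∧ D * Jmat m₁ m₂ * D = Jmat m₁ m₂ ∧
      ∀ D' : Matrix (Fin m₁ ⊕ Fin m₂) (Fin m₁ ⊕ Fin m₂) ℂ,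
        D'.PosDef → D' ^ ℓ = C → D' = D := by
  have hℓ' : ℓ ≠ 0 := Nat.one_le_iff_ne_zero.mp hℓ
  set J := Jmat m₁ m₂ with hJdef
  have hJJ : J * J = 1 := by
    simp [hJdef, Jmat, Matrix.fromBlocks_multiply, Matrix.fromBlocks_one]
  have hJH : Jᴴ = J := by
    simp [hJdef, Jmat, Matrix.fromBlocks_conjTranspose]
  let uJ : (Matrix (Fin m₁ ⊕ Fin m₂) (Fin m₁ ⊕ Fin m₂) ℂ)ˣ := ⟨J, J, hJJ, hJJ⟩
  have hJunit : IsUnit J := ⟨uJ, rfl⟩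
  set D := cfc (fun x : ℝ => x ^ ((ℓ : ℝ)⁻¹)) C with hDdef
  have hD : D.PosDef := root_posDef hC ℓ
  have hDl : D ^ ℓ = C := root_pow hC hℓ'
  -- the conjugated matrix
  have hE : (J * D * J).PosDef := by
    have := posDef_conj hD hJunit
    rwa [hJH] at this
  have hCinv : C⁻¹ = J * C * J := by
    apply Matrix.inv_eq_left_inv
    calc J * C * J * C = J * (C * J * C) := by simp only [mul_assoc]
    _ = 1 := by rw [hCj, hJJ]
  have hEpow : (J * D * J) ^ ℓ = C⁻¹ := by
    have key := Units.conj_pow uJ D ℓ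
    have hc1 : ((uJ : (Matrix (Fin m₁ ⊕ Fin m₂) (Fin m₁ ⊕ Fin m₂) ℂ)ˣ) : Matrix (Fin m₁ ⊕ Fin m₂) (Fin m₁ ⊕ Fin m₂) ℂ) = J := rfl
    have hc2 : ((uJ⁻¹ : (Matrix (Fin m₁ ⊕ Fin m₂) (Fin m₁ ⊕ Fin m₂) ℂ)ˣ) : Matrix (Fin m₁ ⊕ Fin m₂) (Fin m₁ ⊕ Fin m₂) ℂ) = J := rfl
    rw [hc1, hc2, hDl] at key
    exact key.trans hCinv.symm
  have hDinvpow : D⁻¹ ^ ℓ = C⁻¹ := by rw [Matrix.inv_pow', hDl]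
  have hEeq : J * D * J = D⁻¹ :=
    root_unique hE hD.inv hℓ' (hEpow.trans hDinvpow.symm)
  have hDJD : D * J * D = J := by
    have h1 : D * J * D * J = 1 := by
      calc D * J * D * J = D * (J * D * J) := by simp only [mul_assoc]
      _ = D * D⁻¹ := by rw [hEeq]
      _ = 1 := Matrix.mul_nonsing_inv D ((Matrix.isUnit_iff_isUnit_det D).mp hD.isUnit)
    calc D * J * D = D * J * D * (J * J) := by rw [hJJ, mul_one]
    _ = (D * J * D * J) * J := by simp only [mul_assoc]
    _ = J := by rw [h1, one_mul]
  exact ⟨D, hD, hDl, hDJD, fun D' hD' hD'l => root_unique hD' hD hℓ' (hD'l.trans hDl.symm)⟩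
end

section
/- Let m₁, m₂ ∈ ℕ, m = m₁ + m₂ > 0, j = diag(I_{m₁}, −I_{m₂}) ∈ ℂ^{m×m}, and let C ∈ ℂ^{m×m} be positive definite with C·j·C = j. Then there exists a matrix ρ ∈ ℂ^{m₁×m₂} such that I_{m₂} − ρ*·ρ is positive definite and C = diag((I_{m₁} − ρρ*)^{−1/2}, (I_{m₂} − ρ*ρ)^{−1/2}) · [[I_{m₁}, ρ], [ρ*, I_{m₂}]], where for a positive definite matrix P, P^{−1/2} denotes the inverse of the unique positive definite square root of P, diag(X, Y) denotes the block diagonal matrix with blocks X and Y, and [[I_{m₁}, ρ], [ρ*, I_{m₂}]] denotes the 2×2 block matrix with the indicated blocks. -/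
open Matrix
open scoped ComplexOrder

private lemma posDef_mul_self {n : Type*} [Fintype n] [DecidableEq n]
    {P : Matrix n n ℂ} (hP : P.PosDef) : (P * P).PosDef := by
  refine PosDef.of_dotProduct_mulVec_pos ?_ (fun x hx => ?_)
  · show (P * P)ᴴ = P * P
    rw [conjTranspose_mul, hP.isHermitian.eq]
  · have hPx : P *ᵥ x ≠ 0 := by
      have hinj : Function.Injective (P.mulVec) :=
        mulVec_injective_iff_isUnit.mpr hP.isUnit
      intro h
      exact hx (hinj (by simpa using h))
    have key : star x ⬝ᵥ (P * P) *ᵥ x = star (P *ᵥ x) ⬝ᵥ (P *ᵥ x) := by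
      rw [star_mulVec, hP.isHermitian.eq, ← mulVec_mulVec, dotProduct_mulVec]
    rw [key]
    have := (Matrix.PosDef.one (n := n) (R := ℂ)).dotProduct_mulVec_pos hPx
    simpa using this

private lemma posDef_toBlocks₁₁ {n m : Type*} [Fintype n] [Fintype m]
    {C : Matrix (n ⊕ m) (n ⊕ m) ℂ} (hC : C.PosDef) : C.toBlocks₁₁.PosDef := by
  refine PosDef.of_dotProduct_mulVec_pos (hC.isHermitian.submatrix Sum.inl) (fun x hx => ?_)
  have hy : Sum.elim x (0 : m → ℂ) ≠ 0 := by
    intro h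
    exact hx (funext fun i => congrFun h (Sum.inl i))
  have := hC.dotProduct_mulVec_pos hy
  have hstar : star (Sum.elim x (0 : m → ℂ)) = Sum.elim (star x) (0 : m → ℂ) := by
    funext i; cases i <;> simp [Pi.star_apply]
  rw [← fromBlocks_toBlocks C, fromBlocks_mulVec, hstar,
    sumElim_dotProduct_sumElim] at this
  simpa using this

private lemma posDef_toBlocks₂₂ {n m : Type*} [Fintype n] [Fintype m]
    {C : Matrix (n ⊕ m) (n ⊕ m) ℂ} (hC : C.PosDef) : C.toBlocks₂₂.PosDef := by
  refine PosDef.of_dotProduct_mulVec_pos (hC.isHermitian.submatrix Sum.inr) (fun x hx => ?_)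
  have hy : Sum.elim (0 : n → ℂ) x ≠ 0 := by
    intro h
    exact hx (funext fun i => congrFun h (Sum.inr i))
  have := hC.dotProduct_mulVec_pos hy
  have hstar : star (Sum.elim (0 : n → ℂ) x) = Sum.elim (0 : n → ℂ) (star x) := by
    funext i; cases i <;> simp [Pi.star_apply]
  rw [← fromBlocks_toBlocks C, fromBlocks_mulVec, hstar,
    sumElim_dotProduct_sumElim] at this
  simpa using this

/-- Halmos extension representation of Proposition B.3. If `C > 0`
satisfies `C j C = j`, then there is `ρ ∈ ℂ^{m₁×m₂}` with `I_{m₂} − ρ*ρ > 0` such that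
`C = diag((I_{m₁} − ρρ*)^{−1/2}, (I_{m₂} − ρ*ρ)^{−1/2}) · [[I_{m₁}, ρ], [ρ*, I_{m₂}]]`,
where `P^{−1/2}` is the inverse of the unique positive definite square root of `P`
(here represented by positive definite matrices `D₁, D₂` with `D₁² = I − ρρ*`,
`D₂² = I − ρ*ρ`). -/
theorem halmos_extension_representation {m₁ m₂ : ℕ} (hm : 0 < m₁ + m₂)
    (C : Matrix (Fin m₁ ⊕ Fin m₂) (Fin m₁ ⊕ Fin m₂) ℂ)
    (hC : C.PosDef) (hCj : C * Jmat m₁ m₂ * C = Jmat m₁ m₂) :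
    ∃ (ρ : Matrix (Fin m₁) (Fin m₂) ℂ) (D₁ : Matrix (Fin m₁) (Fin m₁) ℂ)
      (D₂ : Matrix (Fin m₂) (Fin m₂) ℂ),
      (1 - ρᴴ * ρ).PosDef ∧
      D₁.PosDef ∧ D₁ ^ 2 = 1 - ρ * ρᴴ ∧
      D₂.PosDef ∧ D₂ ^ 2 = 1 - ρᴴ * ρ ∧
      C = Matrix.fromBlocks D₁⁻¹ 0 0 D₂⁻¹ * Matrix.fromBlocks 1 ρ ρᴴ 1 := by
  classical
  set A := C.toBlocks₁₁ with hA_def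
  set B := C.toBlocks₁₂ with hB_def
  set B' := C.toBlocks₂₁ with hB'_def
  set D := C.toBlocks₂₂ with hD_def
  have hCblocks : C = fromBlocks A B B' D := (fromBlocks_toBlocks C).symm
  have hB' : B' = Bᴴ := by
    have h := hC.isHermitian.eq
    rw [hCblocks, fromBlocks_conjTranspose] at h
    obtain ⟨-, -, h21, -⟩ := fromBlocks_inj.mp h
    exact h21.symm
  rw [hB'] at hCblocks
  have hAd : A.PosDef := posDef_toBlocks₁₁ hC
  have hDd : D.PosDef := posDef_toBlocks₂₂ hC
  have hAu : IsUnit A.det := (Matrix.isUnit_iff_isUnit_det A).mp hAd.isUnit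
  have hDu : IsUnit D.det := (Matrix.isUnit_iff_isUnit_det D).mp hDd.isUnit
  -- extract block equations
  rw [hCblocks] at hCj
  simp only [Jmat, fromBlocks_multiply, Matrix.mul_one, Matrix.mul_zero, Matrix.zero_mul,
    Matrix.one_mul, add_zero, zero_add, Matrix.mul_neg, Matrix.neg_mul, neg_neg] at hCj
  obtain ⟨e11, e12, e21, e22⟩ := fromBlocks_inj.mp hCj
  have e11' : A * A - B * Bᴴ = 1 := by rw [← e11]; abel
  have e12' : A * B = B * D := by rwa [add_neg_eq_zero] at e12
  have e22' : D * D - Bᴴ * B = 1 := by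
    have h : Bᴴ * B - D * D = -1 := by rw [sub_eq_add_neg]; exact e22
    calc D * D - Bᴴ * B = -(Bᴴ * B - D * D) := by abel
    _ = 1 := by rw [h, neg_neg]
  set ρ := A⁻¹ * B with hρ_def
  have hABρ : A * (B * D⁻¹) = B := by
    rw [← Matrix.mul_assoc, e12', mul_nonsing_inv_cancel_right _ _ hDu]
  have hρ2 : ρ = B * D⁻¹ := by
    calc ρ = A⁻¹ * B := rfl
    _ = A⁻¹ * (A * (B * D⁻¹)) := by rw [hABρ]
    _ = B * D⁻¹ := nonsing_inv_mul_cancel_left _ _ hAu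
  have hAinvH : A⁻¹ᴴ = A⁻¹ := by rw [conjTranspose_nonsing_inv, hAd.isHermitian.eq]
  have hDinvH : D⁻¹ᴴ = D⁻¹ := by rw [conjTranspose_nonsing_inv, hDd.isHermitian.eq]
  have hρH : ρᴴ = Bᴴ * A⁻¹ := by rw [hρ_def, conjTranspose_mul, hAinvH]
  have hρH2 : ρᴴ = D⁻¹ * Bᴴ := by rw [hρ2, conjTranspose_mul, hDinvH]
  have key1 : (1 : Matrix (Fin m₁) (Fin m₁) ℂ) - ρ * ρᴴ = A⁻¹ * A⁻¹ := by
    have expand : A⁻¹ * (A * A - B * Bᴴ) * A⁻¹ = 1 - ρ * ρᴴ := by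
      rw [Matrix.mul_sub, Matrix.sub_mul, nonsing_inv_mul_cancel_left _ _ hAu,
        Matrix.mul_nonsing_inv _ hAu, hρH, hρ_def]
      congr 1
      rw [Matrix.mul_assoc, Matrix.mul_assoc, Matrix.mul_assoc]
    rw [← expand, e11', Matrix.mul_one]
  have key2 : (1 : Matrix (Fin m₂) (Fin m₂) ℂ) - ρᴴ * ρ = D⁻¹ * D⁻¹ := by
    have expand : D⁻¹ * (D * D - Bᴴ * B) * D⁻¹ = 1 - ρᴴ * ρ := by
      rw [Matrix.mul_sub, Matrix.sub_mul, nonsing_inv_mul_cancel_left _ _ hDu,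
        Matrix.mul_nonsing_inv _ hDu, hρH2, hρ2]
      congr 1
      rw [Matrix.mul_assoc, Matrix.mul_assoc, Matrix.mul_assoc]
    rw [← expand, e22', Matrix.mul_one]
  refine ⟨ρ, A⁻¹, D⁻¹, ?_, hAd.inv, ?_, hDd.inv, ?_, ?_⟩
  · rw [key2]; exact posDef_mul_self hDd.inv
  · rw [key1, pow_two]
  · rw [key2, pow_two]
  · rw [hCblocks, Matrix.nonsing_inv_nonsing_inv _ hAu, Matrix.nonsing_inv_nonsing_inv _ hDu,
      fromBlocks_multiply]
    simp only [Matrix.mul_one, Matrix.mul_zero, Matrix.zero_mul, Matrix.one_mul,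
      add_zero, zero_add]
    rw [hρH2, hρ_def, ← Matrix.mul_assoc, Matrix.mul_nonsing_inv _ hAu, Matrix.one_mul,
      mul_nonsing_inv_cancel_left _ _ hDu]
end

section
/- Let m₁, m₂ ∈ ℕ with m₁, m₂ > 0, m = m₁ + m₂, j = diag(I_{m₁}, −I_{m₂}). Let r ∈ ℕ (r ≥ 1), let c₁, …, c_r be distinct reals and A ∈ ℂ^{n×n} with A − cₖIₙ invertible for all k; set B := Σ_{k=1}^r (A − cₖIₙ)⁻¹. Let θ₁ ∈ ℂ^{n×m₁}, θ₂ ∈ ℂ^{n×m₂}, and let C₁, C₂ ∈ ℂ^{n×n} satisfy A·Cᵢ − Cᵢ·A* = i·θᵢ·θᵢ* (i = 1, 2). Define Π(x) := [e^{−ixB}θ₁ e^{ixB}θ₂] (horizontal block concatenation, an n×m matrix) and S(x) := e^{−ixB}·C₁·e^{ixB*} − e^{ixB}·C₂·e^{−ixB*}. Then for all x ∈ ℝ: (i) Π′(x) = −i·Σ_{k=1}^r (A − cₖIₙ)⁻¹·Π(x)·j, and (ii) A·S(x) − S(x)·A* = i·Π(x)·j·Π(x)*. -/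
open Matrix

open NormedSpace in
/-- entrywise derivative of `t ↦ exp (t • N)` (instance-independent statement). -/
lemma entry_hasDerivAt {n : ℕ} (N : Matrix (Fin n) (Fin n) ℂ) (t : ℝ) (i j : Fin n) :
    HasDerivAt (fun u : ℝ => exp (u • N) i j) ((N * exp (t • N)) i j) t := by
  letI : SeminormedRing (Matrix (Fin n) (Fin n) ℂ) := Matrix.linftyOpSemiNormedRing
  letI : NormedRing (Matrix (Fin n) (Fin n) ℂ) := Matrix.linftyOpNormedRing
  letI : NormedAlgebra ℝ (Matrix (Fin n) (Fin n) ℂ) := Matrix.linftyOpNormedAlgebra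
  have h1 := hasDerivAt_exp_smul_const' (𝕂 := ℝ) N t
  let l : Matrix (Fin n) (Fin n) ℂ →ₗ[ℝ] ℂ :=
    { toFun := fun M => M i j, map_add' := by intros; rfl, map_smul' := by intros; rfl }
  exact (l.toContinuousLinearMap.hasFDerivAt).comp_hasDerivAt t h1

/-- A matrix commutes with the nonsingular inverse of any matrix it commutes with. -/
lemma commute_nonsing_inv {n : ℕ} {A M : Matrix (Fin n) (Fin n) ℂ} (h : A * M = M * A)
    (hM : IsUnit M) : A * M⁻¹ = M⁻¹ * A := by
  have hd : IsUnit M.det := (Matrix.isUnit_iff_isUnit_det M).mp hM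
  calc A * M⁻¹ = (M⁻¹ * M) * (A * M⁻¹) := by rw [Matrix.nonsing_inv_mul M hd, one_mul]
    _ = M⁻¹ * ((M * A) * M⁻¹) := by simp only [mul_assoc]
    _ = M⁻¹ * ((A * M) * M⁻¹) := by rw [← h]
    _ = M⁻¹ * (A * (M * M⁻¹)) := by simp only [mul_assoc]
    _ = M⁻¹ * A := by rw [Matrix.mul_nonsing_inv M hd, mul_one]


attribute [local instance] Matrix.normedAddCommGroup Matrix.normedSpace

/-- Example 3.3. For the trivial initial Hamiltonians `Hₖ(x) ≡ I_m`,
with `B = Σₖ (A − cₖIₙ)⁻¹`, `A Cᵢ − Cᵢ A* = i θᵢ θᵢ*`,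
`Π(x) = [e^{−ixB}θ₁  e^{ixB}θ₂]` and
`S(x) = e^{−ixB} C₁ e^{ixB*} − e^{ixB} C₂ e^{−ixB*}`, one has
`Π′(x) = −i Σₖ (A − cₖIₙ)⁻¹ Π(x) j` and `A S(x) − S(x) A* = i Π(x) j Π(x)*`. -/
theorem trivial_hamiltonian_example {m₁ m₂ n r : ℕ} (hm₁ : 0 < m₁) (hm₂ : 0 < m₂)
    (hr : 1 ≤ r) (c : Fin r → ℝ) (hc : Function.Injective c)
    (A : Matrix (Fin n) (Fin n) ℂ)
    (hA : ∀ k, IsUnit (A - (c k : ℂ) • (1 : Matrix (Fin n) (Fin n) ℂ)))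
    (θ₁ : Matrix (Fin n) (Fin m₁) ℂ) (θ₂ : Matrix (Fin n) (Fin m₂) ℂ)
    (C₁ C₂ : Matrix (Fin n) (Fin n) ℂ)
    (hC₁ : A * C₁ - C₁ * Aᴴ = Complex.I • (θ₁ * θ₁ᴴ))
    (hC₂ : A * C₂ - C₂ * Aᴴ = Complex.I • (θ₂ * θ₂ᴴ)) :
    let B : Matrix (Fin n) (Fin n) ℂ := ∑ k : Fin r, (A - (c k : ℂ) • 1)⁻¹
    let P : ℝ → Matrix (Fin n) (Fin m₁ ⊕ Fin m₂) ℂ := fun x =>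
      fromCols (NormedSpace.exp (-((Complex.I * (x : ℂ)) • B)) * θ₁)
        (NormedSpace.exp ((Complex.I * (x : ℂ)) • B) * θ₂)
    let S : ℝ → Matrix (Fin n) (Fin n) ℂ := fun x =>
      NormedSpace.exp (-((Complex.I * (x : ℂ)) • B)) * C₁ *
          NormedSpace.exp ((Complex.I * (x : ℂ)) • Bᴴ) -
        NormedSpace.exp ((Complex.I * (x : ℂ)) • B) * C₂ *
          NormedSpace.exp (-((Complex.I * (x : ℂ)) • Bᴴ))
    ∀ x : ℝ,
      HasDerivAt P
        (-(Complex.I • ∑ k : Fin r, (A - (c k : ℂ) • 1)⁻¹ * P x * Jmat m₁ m₂)) x ∧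
      A * S x - S x * Aᴴ = Complex.I • (P x * Jmat m₁ m₂ * (P x)ᴴ) := by
  intro B P S x
  have hB : B = ∑ k : Fin r, (A - (c k : ℂ) • 1)⁻¹ := rfl
  set N₁ : Matrix (Fin n) (Fin n) ℂ := -(Complex.I • B) with hN₁
  set N₂ : Matrix (Fin n) (Fin n) ℂ := Complex.I • B with hN₂
  have hs : ∀ t : ℝ, (Complex.I * (t : ℂ)) • B = t • N₂ := by
    intro t
    rw [hN₂, ← Complex.coe_smul, smul_smul, mul_comm]
  have hs₁ : ∀ t : ℝ, -((Complex.I * (t : ℂ)) • B) = t • N₁ := by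
    intro t
    rw [hs t, hN₁, hN₂, ← Complex.coe_smul, ← Complex.coe_smul, smul_neg]
  -- commutation of A with B
  have hAB : A * B = B * A := by
    rw [hB, Finset.mul_sum, Finset.sum_mul]
    refine Finset.sum_congr rfl fun k _ => ?_
    refine commute_nonsing_inv ?_ (hA k)
    simp [mul_sub, sub_mul, Matrix.mul_smul, Matrix.smul_mul]
  have hABH : Aᴴ * Bᴴ = Bᴴ * Aᴴ := by
    have := congrArg conjTranspose hAB
    simpa only [conjTranspose_mul] using this.symm
  -- abbreviations
  set e₁ := NormedSpace.exp (-((Complex.I * (x : ℂ)) • B)) with he₁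
  set e₂ := NormedSpace.exp ((Complex.I * (x : ℂ)) • B) with he₂
  set f₁ := NormedSpace.exp ((Complex.I * (x : ℂ)) • Bᴴ) with hf₁
  set f₂ := NormedSpace.exp (-((Complex.I * (x : ℂ)) • Bᴴ)) with hf₂
  have hcAB : Commute A B := hAB
  have hcABH : Commute Aᴴ Bᴴ := hABH
  have cAe₁ : A * e₁ = e₁ * A := by
    rw [he₁]
    exact (Commute.exp_right ((hcAB.smul_right (Complex.I * (x:ℂ))).neg_right)).eq
  have cAe₂ : A * e₂ = e₂ * A := by
    rw [he₂]
    exact (Commute.exp_right (hcAB.smul_right (Complex.I * (x:ℂ)))).eq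
  have cAf₁ : f₁ * Aᴴ = Aᴴ * f₁ := by
    rw [hf₁]
    exact (Commute.exp_right (hcABH.smul_right (Complex.I * (x:ℂ)))).symm.eq
  have cAf₂ : f₂ * Aᴴ = Aᴴ * f₂ := by
    rw [hf₂]
    exact (Commute.exp_right ((hcABH.smul_right (Complex.I * (x:ℂ))).neg_right)).symm.eq
  have hstar : star (Complex.I * (x : ℂ)) = -(Complex.I * (x : ℂ)) := by
    simp only [star_mul', Complex.star_def, Complex.conj_I, Complex.conj_ofReal]
    ring
  -- conjugate transposes of the exponentials
  have he₁H : e₁ᴴ = f₁ := by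
    rw [he₁, hf₁, ← Matrix.exp_conjTranspose]
    congr 1
    rw [conjTranspose_neg, conjTranspose_smul, hstar, neg_smul, neg_neg]
  have he₂H : e₂ᴴ = f₂ := by
    rw [he₂, hf₂, ← Matrix.exp_conjTranspose]
    congr 1
    rw [conjTranspose_smul, hstar, neg_smul]
  -- P x in block form
  have hPx : P x = fromCols (e₁ * θ₁) (e₂ * θ₂) := rfl
  have hPJ : P x * Jmat m₁ m₂ = fromCols (e₁ * θ₁) (-(e₂ * θ₂)) := by
    rw [hPx, Jmat, fromCols_mul_fromBlocks]
    simp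
  constructor
  · -- derivative statement
    have hD : -(Complex.I • ∑ k : Fin r, (A - (c k : ℂ) • 1)⁻¹ * P x * Jmat m₁ m₂) =
        fromCols (N₁ * NormedSpace.exp (x • N₁) * θ₁)
          (N₂ * NormedSpace.exp (x • N₂) * θ₂) := by
      rw [← Matrix.sum_mul, ← Matrix.sum_mul, ← hB, Matrix.mul_assoc, hPJ, mul_fromCols]
      rw [← hs₁ x, ← hs x, ← he₁, ← he₂]
      rw [show N₁ * e₁ * θ₁ = -(Complex.I • (B * (e₁ * θ₁))) by
            rw [hN₁, hN₂]; simp [Matrix.neg_mul, Matrix.smul_mul, Matrix.mul_assoc],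
          show N₂ * e₂ * θ₂ = Complex.I • (B * (e₂ * θ₂)) by
            rw [hN₂]; simp [Matrix.smul_mul, Matrix.mul_assoc]]
      ext i j
      rcases j with j | j <;>
        simp [fromCols_apply_inl, fromCols_apply_inr, Matrix.neg_apply,
          Matrix.smul_apply, Matrix.mul_neg]
    rw [hD]
    have hPfun : P = fun t : ℝ => fromCols (NormedSpace.exp (t • N₁) * θ₁)
        (NormedSpace.exp (t • N₂) * θ₂) := by
      funext t
      have : P t = fromCols (NormedSpace.exp (-((Complex.I * (t : ℂ)) • B)) * θ₁)
          (NormedSpace.exp ((Complex.I * (t : ℂ)) • B) * θ₂) := rfl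
      rw [this, hs₁ t, hs t]
    rw [hPfun]
    refine hasDerivAt_pi.mpr fun i => hasDerivAt_pi.mpr fun j => ?_
    rcases j with j | j
    · simp only [fromCols_apply_inl, Matrix.mul_apply]
      exact HasDerivAt.fun_sum fun k _ => (entry_hasDerivAt N₁ x i k).mul_const (θ₁ k j)
    · simp only [fromCols_apply_inr, Matrix.mul_apply]
      exact HasDerivAt.fun_sum fun k _ => (entry_hasDerivAt N₂ x i k).mul_const (θ₂ k j)
  · -- the identity for S
    have hSx : S x = e₁ * C₁ * f₁ - e₂ * C₂ * f₂ := rfl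
    have key : A * S x - S x * Aᴴ =
        e₁ * (A * C₁ - C₁ * Aᴴ) * f₁ - e₂ * (A * C₂ - C₂ * Aᴴ) * f₂ := by
      rw [hSx]
      simp only [mul_sub, sub_mul, mul_assoc]
      rw [show A * (e₁ * (C₁ * f₁)) = e₁ * (A * (C₁ * f₁)) by
            rw [← mul_assoc, cAe₁, mul_assoc],
          show A * (e₂ * (C₂ * f₂)) = e₂ * (A * (C₂ * f₂)) by
            rw [← mul_assoc, cAe₂, mul_assoc],
          show C₁ * (f₁ * Aᴴ) = C₁ * (Aᴴ * f₁) by rw [cAf₁],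
          show C₂ * (f₂ * Aᴴ) = C₂ * (Aᴴ * f₂) by rw [cAf₂]]
      noncomm_ring
    rw [key, hC₁, hC₂]
    have hPH : (P x)ᴴ = fromRows (e₁ * θ₁)ᴴ (e₂ * θ₂)ᴴ := by
      rw [hPx, conjTranspose_fromCols_eq_fromRows_conjTranspose]
    rw [hPJ, hPH, fromCols_mul_fromRows, conjTranspose_mul, conjTranspose_mul, he₁H, he₂H]
    rw [Matrix.neg_mul, ← sub_eq_add_neg, smul_sub, Matrix.mul_smul, Matrix.smul_mul,
      Matrix.mul_smul, Matrix.smul_mul]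
    simp only [Matrix.mul_assoc]
end
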